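/- arXiv:2502.08519 — 8 statements merged into one kernel-verified Lean document; each statement's English description precedes it below -/
import Mathlib

section
/- Let A ∈ ℝ^{n×n} with A = Aᵀ and all entries A_{ij} ≤ −1, and let A_min be the minimum entry. Define the 3-player adversarial team game where the adversary's utility is u(x,y,z) = ⟨x, A y⟩ + (|A_min|/ε) · Σ_{i=1}^n (z_i(x_i − y_i) + z_{n+i}(y_i − x_i)) + z_{2n+1}|A_min|, with x, y ∈ Δⁿ (team, minimizing u) and z ∈ Δ^{2n+1} (adversary, maximizing u). If (x*, y*, z*) is an ε²-Nash equilibrium with ε² ≤ 1/2, then ‖x* − y*‖_∞ ≤ 2ε. -/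
open Matrix Finset

/-- Adversary index set: `2n` "comparison" actions plus one extra action. -/
abbrev AdvIdx (n : ℕ) := (Fin n ⊕ Fin n) ⊕ Unit

/-- Utility of the adversary in the 3-player adversarial team game. -/
noncomputable def advUtil {n : ℕ} (A : Matrix (Fin n) (Fin n) ℝ) (Amin ε : ℝ)
    (x y : Fin n → ℝ) (z : AdvIdx n → ℝ) : ℝ :=
  x ⬝ᵥ A.mulVec y
    + (|Amin| / ε) * ∑ i : Fin n,
        (z (Sum.inl (Sum.inl i)) * (x i - y i) + z (Sum.inl (Sum.inr i)) * (y i - x i))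
    + z (Sum.inr ()) * |Amin|

theorem stmt_3 {n : ℕ} (A : Matrix (Fin n) (Fin n) ℝ) (hsym : A.IsSymm)
    (hentries : ∀ i j, A i j ≤ -1)
    (Amin : ℝ) (hAmin : IsLeast {r : ℝ | ∃ i j, A i j = r} Amin)
    (ε : ℝ) (hε : 0 < ε) (hε2 : ε ^ 2 ≤ 1 / 2)
    (xs ys : Fin n → ℝ) (zs : AdvIdx n → ℝ)
    (hxs : xs ∈ stdSimplex ℝ (Fin n)) (hys : ys ∈ stdSimplex ℝ (Fin n))
    (hzs : zs ∈ stdSimplex ℝ (AdvIdx n))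
    (hNashx : ∀ x' ∈ stdSimplex ℝ (Fin n),
      advUtil A Amin ε xs ys zs ≤ advUtil A Amin ε x' ys zs + ε ^ 2)
    (hNashy : ∀ y' ∈ stdSimplex ℝ (Fin n),
      advUtil A Amin ε xs ys zs ≤ advUtil A Amin ε xs y' zs + ε ^ 2)
    (hNashz : ∀ z' ∈ stdSimplex ℝ (AdvIdx n),
      advUtil A Amin ε xs ys z' ≤ advUtil A Amin ε xs ys zs + ε ^ 2) :
    ∀ i : Fin n, |xs i - ys i| ≤ 2 * ε := by
  intro i
  obtain ⟨⟨i0, j0, hij⟩, hlb⟩ := hAmin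
  have hA1 : Amin ≤ -1 := hij ▸ hentries i0 j0
  have habs : |Amin| = -Amin := abs_of_neg (by linarith)
  have hA1' : (1:ℝ) ≤ |Amin| := by rw [habs]; linarith
  -- lower bound on quadratic form
  have hdot : ∀ u v : Fin n → ℝ, u ⬝ᵥ A.mulVec v = ∑ p : Fin n, ∑ q : Fin n, u p * A p q * v q := by
    intro u v
    simp [dotProduct, mulVec, Finset.mul_sum, mul_assoc]
  have hqsum : ∀ (c : ℝ) (u v : Fin n → ℝ), u ∈ stdSimplex ℝ (Fin n) → v ∈ stdSimplex ℝ (Fin n) →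
      ∑ p : Fin n, ∑ q : Fin n, u p * c * v q = c := by
    intro c u v hu hv
    have : ∀ p : Fin n, ∑ q : Fin n, u p * c * v q = u p * c := by
      intro p
      rw [← Finset.mul_sum, hv.2, mul_one]
    rw [Finset.sum_congr rfl fun p _ => this p, ← Finset.sum_mul, hu.2, one_mul]
  have hlow : Amin ≤ xs ⬝ᵥ A.mulVec ys := by
    rw [hdot, ← hqsum Amin xs ys hxs hys]
    refine Finset.sum_le_sum fun p _ => Finset.sum_le_sum fun q _ => ?_
    have := hlb ⟨p, q, rfl⟩
    have h1 := hxs.1 p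
    have h2 := hys.1 q
    exact mul_le_mul_of_nonneg_right (mul_le_mul_of_nonneg_left this h1) h2
  have hhigh : xs ⬝ᵥ A.mulVec xs ≤ -1 := by
    rw [hdot]
    calc ∑ p : Fin n, ∑ q : Fin n, xs p * A p q * xs q
        ≤ ∑ p : Fin n, ∑ q : Fin n, xs p * (-1) * xs q := by
          refine Finset.sum_le_sum fun p _ => Finset.sum_le_sum fun q _ => ?_
          have := hentries p q
          have h1 := hxs.1 p
          have h2 := hxs.1 q
          nlinarith [mul_le_mul_of_nonneg_right (mul_le_mul_of_nonneg_left this h1) h2]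
      _ = -1 := hqsum (-1) xs xs hxs hxs
  -- zs unit coordinate ≤ 1
  have hzunit0 : 0 ≤ zs (Sum.inr ()) := hzs.1 _
  have hzunit : zs (Sum.inr ()) ≤ 1 := by
    rw [← hzs.2]
    exact Finset.single_le_sum (fun k _ => hzs.1 k) (Finset.mem_univ _)
  -- upper bound on equilibrium utility
  have hupper : advUtil A Amin ε xs ys zs ≤ -1 + |Amin| + ε ^ 2 := by
    have h := hNashy xs hxs
    have heq : advUtil A Amin ε xs xs zs = xs ⬝ᵥ A.mulVec xs + zs (Sum.inr ()) * |Amin| := by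
      unfold advUtil; simp
    have : zs (Sum.inr ()) * |Amin| ≤ |Amin| := by nlinarith
    rw [heq] at h
    linarith
  -- key inequality for an indicator deviation
  have key : ∀ e : AdvIdx n,
      advUtil A Amin ε xs ys (fun k => if k = e then (1:ℝ) else 0)
        ≤ -1 + |Amin| + 2 * ε ^ 2 := by
    intro e
    have hmem : (fun k : AdvIdx n => if k = e then (1:ℝ) else 0) ∈ stdSimplex ℝ (AdvIdx n) := by
      constructor
      · intro k; dsimp only; split <;> norm_num
      · simp
    have := hNashz _ hmem
    linarith [hupper]
  have habs2ε : ∀ d : ℝ, |Amin| / ε * d ≤ 2 * |Amin| → d ≤ 2 * ε := by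
    intro d hd
    rw [div_mul_eq_mul_div, div_le_iff₀ hε] at hd
    nlinarith
  have hval1 : advUtil A Amin ε xs ys (fun k => if k = (Sum.inl (Sum.inl i) : AdvIdx n) then (1:ℝ) else 0)
      = xs ⬝ᵥ A.mulVec ys + |Amin| / ε * (xs i - ys i) := by
    unfold advUtil
    simp [Finset.sum_ite_eq']
  have hval2 : advUtil A Amin ε xs ys (fun k => if k = (Sum.inl (Sum.inr i) : AdvIdx n) then (1:ℝ) else 0)
      = xs ⬝ᵥ A.mulVec ys + |Amin| / ε * (ys i - xs i) := by
    unfold advUtil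
    simp [Finset.sum_ite_eq']
  have h1 := key (Sum.inl (Sum.inl i))
  have h2 := key (Sum.inl (Sum.inr i))
  rw [hval1] at h1
  rw [hval2] at h2
  have hb1 : xs i - ys i ≤ 2 * ε := by
    apply habs2ε; rw [habs] at *; linarith
  have hb2 : ys i - xs i ≤ 2 * ε := by
    apply habs2ε; rw [habs] at *; linarith
  rw [abs_sub_le_iff]
  exact ⟨hb1, hb2⟩
end

section
/- In the setting of the 3-player adversarial team game with adversary utility u(x,y,z) = ⟨x, A y⟩ + (|A_min|/ε) Σᵢ (z_i(x_i − y_i) + z_{n+i}(y_i − x_i)) + z_{2n+1}|A_min|, where A = Aᵀ has all entries ≤ −1: if (x*, y*, z*) is an ε²-Nash equilibrium with ε ≤ 1/10, then z*_j ≤ 9ε for all j ∈ [2n], and consequently z*_{2n+1} ≥ 1 − 18nε. -/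
open Matrix Finset

set_option maxHeartbeats 1000000

lemma core_contra {n : ℕ} (hn : 0 < n) (ε M : ℝ) (hε : 0 < ε) (hε10 : ε ≤ 1/10) (hM : 1 ≤ M)
    (x y zl zr a w : Fin n → ℝ)
    (hx0 : ∀ i, 0 ≤ x i) (hx1 : ∑ i, x i = 1)
    (hy0 : ∀ i, 0 ≤ y i) (hy1 : ∑ i, y i = 1)
    (hzr0 : ∀ i, 0 ≤ zr i)
    (hZl : ∀ k, M * (zl k * (ε - (x k - y k))) ≤ ε^3)
    (hZr : ∀ k, M * (zr k * (ε + (x k - y k))) ≤ ε^3)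
    (ha1 : ∀ k, -M ≤ a k) (ha2 : ∀ k, a k ≤ -1)
    (hwdef : ∀ k, w k = a k + (M/ε) * (zl k - zr k))
    (hNash : ∀ k, ∑ i, x i * w i ≤ w k + ε^2)
    (j : Fin n) (h9 : 9 * ε < zl j) : False := by
  have hq : M / ε * ε = M := div_mul_cancel₀ M hε.ne'
  have hMpos : 0 < M := lt_of_lt_of_le one_pos hM
  have hqpos : 0 < M / ε := div_pos hMpos hε
  have hzlj0 : 0 < zl j := by nlinarith
  -- δ j is large
  have hδj : ε - ε^2/9 ≤ x j - y j := by
    by_contra hc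
    push_neg at hc
    have h1 : ε^2/9 < ε - (x j - y j) := by linarith
    have h2 : 9*ε*(ε^2/9) < zl j * (ε - (x j - y j)) :=
      mul_lt_mul'' h9 h1 (by positivity) (by positivity)
    have h3 : zl j * (ε - (x j - y j)) ≤ M * (zl j * (ε - (x j - y j))) :=
      le_mul_of_one_le_left (by nlinarith) hM
    nlinarith [hZl j]
  have hδjpos : 0 < x j - y j := by nlinarith
  have hxj : ε - ε^2/9 ≤ x j := by have := hy0 j; linarith
  have hzrj : zr j ≤ ε^2 := by
    have t0 : zr j * ε ≤ zr j * (ε + (x j - y j)) :=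
      mul_le_mul_of_nonneg_left (by linarith) (hzr0 j)
    have t1 : zr j * (ε + (x j - y j)) ≤ M * (zr j * (ε + (x j - y j))) :=
      le_mul_of_one_le_left (mul_nonneg (hzr0 j) (by linarith)) hM
    have t2 : zr j * ε ≤ ε^2 * ε := by nlinarith [hZr j]
    exact le_of_mul_le_mul_right t2 hε
  have hwj : M * (8 - ε) ≤ w j := by
    rw [hwdef j]
    have h1 : 9*ε - ε^2 ≤ zl j - zr j := by linarith
    have h2 : M/ε * (9*ε - ε^2) ≤ M/ε * (zl j - zr j) :=
      mul_le_mul_of_nonneg_left h1 hqpos.le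
    have h3 : M/ε * (9*ε - ε^2) = 9*M - M*ε := by field_simp
    have := ha1 j; linarith
  obtain ⟨m, -, hm⟩ := Finset.exists_min_image (Finset.univ : Finset (Fin n)) w
    ⟨⟨0, hn⟩, Finset.mem_univ _⟩
  have hm' : ∀ i, w m ≤ w i := fun i => hm i (Finset.mem_univ i)
  have hsum : x j * w j + (1 - x j) * w m ≤ ∑ i, x i * w i := by
    have e1 : ∑ i, x i * w i = x j * w j + ∑ i ∈ Finset.univ.erase j, x i * w i :=
      (Finset.add_sum_erase _ _ (Finset.mem_univ j)).symm
    have e2 : ∑ i ∈ Finset.univ.erase j, x i = 1 - x j := by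
      rw [Finset.sum_erase_eq_sub (Finset.mem_univ j), hx1]
    have e3 : (1 - x j) * w m = ∑ i ∈ Finset.univ.erase j, x i * w m := by
      rw [← Finset.sum_mul, e2]
    rw [e1, e3]
    exact add_le_add_right (Finset.sum_le_sum fun i _ =>
      mul_le_mul_of_nonneg_left (hm' i) (hx0 i)) _
  have hkey : x j * (w j - w m) ≤ ε^2 := by have := hNash m; nlinarith
  have hwm : M * (8 - ε) - 2*ε ≤ w m := by
    have h0 : 0 ≤ w j - w m := by linarith [hm' j]
    have h1 : (ε - ε^2/9) * (w j - w m) ≤ ε^2 :=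
      le_trans (mul_le_mul_of_nonneg_right hxj h0) hkey
    by_contra hc
    push_neg at hc
    have h2 : 2*ε < w j - w m := by linarith
    have h3 : (ε - ε^2/9) * (2*ε) ≤ (ε - ε^2/9) * (w j - w m) :=
      mul_le_mul_of_nonneg_left h2.le (by nlinarith)
    nlinarith
  have hzlk : ∀ k, ε ≤ zl k := by
    intro k
    have h1 : w m + 1 ≤ M/ε * (zl k - zr k) := by
      have h := hm' k; rw [hwdef k] at h; have := ha2 k; linarith
    have h2 : M * (8 - ε) ≤ M/ε * (zl k - zr k) := by linarith
    have h3 := mul_le_mul_of_nonneg_right h2 hε.le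
    have h4 : M/ε * (zl k - zr k) * ε = M * (zl k - zr k) := by
      field_simp
    rw [h4] at h3
    have h5 : (8 - ε) * ε ≤ zl k - zr k := le_of_mul_le_mul_left (by linarith) hMpos
    have := hzr0 k
    nlinarith
  have hδpos : ∀ k, 0 < x k - y k := by
    intro k
    by_contra hc
    push_neg at hc
    have h1 : ε * ε ≤ zl k * (ε - (x k - y k)) :=
      mul_le_mul (hzlk k) (by linarith) hε.le (by linarith [hzlk k])
    have h2 : zl k * (ε - (x k - y k)) ≤ M * (zl k * (ε - (x k - y k))) :=
      le_mul_of_one_le_left (by nlinarith [hzlk k]) hM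
    nlinarith [hZl k]
  have hpos : (0:ℝ) < ∑ i, (x i - y i) :=
    Finset.sum_pos (fun i _ => hδpos i) ⟨⟨0, hn⟩, Finset.mem_univ _⟩
  rw [Finset.sum_sub_distrib, hx1, hy1] at hpos
  linarith

/-- moving the mass of coordinate `p` onto the last coordinate stays in the simplex -/
lemma zmove_mem {n : ℕ} (z : AdvIdx n → ℝ) (hz : z ∈ stdSimplex ℝ (AdvIdx n)) (p : AdvIdx n) :
    (fun i => z i + (if i = Sum.inr () then z p else 0) - (if i = p then z p else 0))
      ∈ stdSimplex ℝ (AdvIdx n) := by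
  obtain ⟨h0, h1⟩ := hz
  constructor
  · intro i
    dsimp only
    have key : (if i = p then z p else 0) ≤ z i := by
      by_cases hi : i = p
      · simp [hi]
      · simp [hi, h0 i]
    have key2 : (0:ℝ) ≤ (if i = Sum.inr () then z p else 0) := by
      by_cases hi2 : i = Sum.inr () <;> simp [hi2, h0 p]
    linarith
  · simp [Finset.sum_add_distrib, Finset.sum_sub_distrib, Finset.sum_ite_eq', h1]

lemma adv_move_l {n : ℕ} (A : Matrix (Fin n) (Fin n) ℝ) (Amin ε : ℝ)
    (x y : Fin n → ℝ) (z : AdvIdx n → ℝ) (k : Fin n) :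
    advUtil A Amin ε x y
      (fun i => z i + (if i = Sum.inr () then z (Sum.inl (Sum.inl k)) else 0)
        - (if i = Sum.inl (Sum.inl k) then z (Sum.inl (Sum.inl k)) else 0))
    = advUtil A Amin ε x y z
      - (|Amin|/ε) * (z (Sum.inl (Sum.inl k)) * (x k - y k))
      + z (Sum.inl (Sum.inl k)) * |Amin| := by
  simp only [advUtil]
  have h1 : ∀ i : Fin n,
      (z (Sum.inl (Sum.inl i)) + (if (Sum.inl (Sum.inl i) : AdvIdx n) = Sum.inr () then z (Sum.inl (Sum.inl k)) else 0)
        - (if (Sum.inl (Sum.inl i) : AdvIdx n) = Sum.inl (Sum.inl k) then z (Sum.inl (Sum.inl k)) else 0)) * (x i - y i)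
      + (z (Sum.inl (Sum.inr i)) + (if (Sum.inl (Sum.inr i) : AdvIdx n) = Sum.inr () then z (Sum.inl (Sum.inl k)) else 0)
        - (if (Sum.inl (Sum.inr i) : AdvIdx n) = Sum.inl (Sum.inl k) then z (Sum.inl (Sum.inl k)) else 0)) * (y i - x i)
      = (z (Sum.inl (Sum.inl i)) * (x i - y i) + z (Sum.inl (Sum.inr i)) * (y i - x i))
        + (if i = k then -(z (Sum.inl (Sum.inl k)) * (x k - y k)) else 0) := by
    intro i
    by_cases h : i = k
    · subst h; simp
    · simp [h]
  rw [Finset.sum_congr rfl (fun i _ => h1 i), Finset.sum_add_distrib, Finset.sum_ite_eq']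
  simp
  ring

lemma adv_move_r {n : ℕ} (A : Matrix (Fin n) (Fin n) ℝ) (Amin ε : ℝ)
    (x y : Fin n → ℝ) (z : AdvIdx n → ℝ) (k : Fin n) :
    advUtil A Amin ε x y
      (fun i => z i + (if i = Sum.inr () then z (Sum.inl (Sum.inr k)) else 0)
        - (if i = Sum.inl (Sum.inr k) then z (Sum.inl (Sum.inr k)) else 0))
    = advUtil A Amin ε x y z
      - (|Amin|/ε) * (z (Sum.inl (Sum.inr k)) * (y k - x k))
      + z (Sum.inl (Sum.inr k)) * |Amin| := by
  simp only [advUtil]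
  have h1 : ∀ i : Fin n,
      (z (Sum.inl (Sum.inl i)) + (if (Sum.inl (Sum.inl i) : AdvIdx n) = Sum.inr () then z (Sum.inl (Sum.inr k)) else 0)
        - (if (Sum.inl (Sum.inl i) : AdvIdx n) = Sum.inl (Sum.inr k) then z (Sum.inl (Sum.inr k)) else 0)) * (x i - y i)
      + (z (Sum.inl (Sum.inr i)) + (if (Sum.inl (Sum.inr i) : AdvIdx n) = Sum.inr () then z (Sum.inl (Sum.inr k)) else 0)
        - (if (Sum.inl (Sum.inr i) : AdvIdx n) = Sum.inl (Sum.inr k) then z (Sum.inl (Sum.inr k)) else 0)) * (y i - x i)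
      = (z (Sum.inl (Sum.inl i)) * (x i - y i) + z (Sum.inl (Sum.inr i)) * (y i - x i))
        + (if i = k then -(z (Sum.inl (Sum.inr k)) * (y k - x k)) else 0) := by
    intro i
    by_cases h : i = k
    · subst h; simp
    · simp [h]
  rw [Finset.sum_congr rfl (fun i _ => h1 i), Finset.sum_add_distrib, Finset.sum_ite_eq']
  simp
  ring

lemma single_dot {n : ℕ} (k : Fin n) (w : Fin n → ℝ) :
    ∑ i, (Pi.single k 1 : Fin n → ℝ) i * w i = w k := by
  simp [Pi.single_apply, ite_mul, Finset.sum_ite_eq']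

lemma repr_x {n : ℕ} (A : Matrix (Fin n) (Fin n) ℝ) (Amin ε : ℝ)
    (ys : Fin n → ℝ) (zs : AdvIdx n → ℝ) (x' : Fin n → ℝ) :
    advUtil A Amin ε x' ys zs
    = (∑ i, x' i * (A.mulVec ys i + (|Amin|/ε) * (zs (Sum.inl (Sum.inl i)) - zs (Sum.inl (Sum.inr i)))))
      + ((|Amin|/ε) * (∑ i, (zs (Sum.inl (Sum.inr i)) - zs (Sum.inl (Sum.inl i))) * ys i)
          + zs (Sum.inr ()) * |Amin|) := by
  simp only [advUtil, dotProduct]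
  rw [Finset.mul_sum, ← Finset.sum_add_distrib]
  rw [show ((|Amin|/ε) * (∑ i, (zs (Sum.inl (Sum.inr i)) - zs (Sum.inl (Sum.inl i))) * ys i))
      = ∑ i, (|Amin|/ε) * ((zs (Sum.inl (Sum.inr i)) - zs (Sum.inl (Sum.inl i))) * ys i) from
    Finset.mul_sum _ _ _]
  rw [show (∑ i, x' i * (A.mulVec ys i + (|Amin|/ε) * (zs (Sum.inl (Sum.inl i)) - zs (Sum.inl (Sum.inr i)))))
        + ((∑ i, (|Amin|/ε) * ((zs (Sum.inl (Sum.inr i)) - zs (Sum.inl (Sum.inl i))) * ys i))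
            + zs (Sum.inr ()) * |Amin|)
      = (∑ i, (x' i * (A.mulVec ys i + (|Amin|/ε) * (zs (Sum.inl (Sum.inl i)) - zs (Sum.inl (Sum.inr i))))
          + (|Amin|/ε) * ((zs (Sum.inl (Sum.inr i)) - zs (Sum.inl (Sum.inl i))) * ys i)))
        + zs (Sum.inr ()) * |Amin| from by rw [Finset.sum_add_distrib]; ring]
  congr 1
  refine Finset.sum_congr rfl fun i _ => ?_
  ring

lemma repr_y {n : ℕ} (A : Matrix (Fin n) (Fin n) ℝ) (Amin ε : ℝ)
    (xs : Fin n → ℝ) (zs : AdvIdx n → ℝ) (y' : Fin n → ℝ) :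
    advUtil A Amin ε xs y' zs
    = (∑ l, y' l * ((∑ i, xs i * A i l) + (|Amin|/ε) * (zs (Sum.inl (Sum.inr l)) - zs (Sum.inl (Sum.inl l)))))
      + ((|Amin|/ε) * (∑ l, (zs (Sum.inl (Sum.inl l)) - zs (Sum.inl (Sum.inr l))) * xs l)
          + zs (Sum.inr ()) * |Amin|) := by
  simp only [advUtil, dotProduct, Matrix.mulVec]
  have hswap : ∑ i, xs i * ∑ l, A i l * y' l = ∑ l, y' l * ∑ i, xs i * A i l := by
    simp_rw [Finset.mul_sum]
    rw [Finset.sum_comm]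
    exact Finset.sum_congr rfl fun l _ => Finset.sum_congr rfl fun i _ => by ring
  rw [hswap]
  rw [Finset.mul_sum, ← Finset.sum_add_distrib]
  rw [show ((|Amin|/ε) * (∑ l, (zs (Sum.inl (Sum.inl l)) - zs (Sum.inl (Sum.inr l))) * xs l))
      = ∑ l, (|Amin|/ε) * ((zs (Sum.inl (Sum.inl l)) - zs (Sum.inl (Sum.inr l))) * xs l) from
    Finset.mul_sum _ _ _]
  rw [show (∑ l, y' l * ((∑ i, xs i * A i l) + (|Amin|/ε) * (zs (Sum.inl (Sum.inr l)) - zs (Sum.inl (Sum.inl l)))))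
        + ((∑ l, (|Amin|/ε) * ((zs (Sum.inl (Sum.inl l)) - zs (Sum.inl (Sum.inr l))) * xs l))
            + zs (Sum.inr ()) * |Amin|)
      = (∑ l, (y' l * ((∑ i, xs i * A i l) + (|Amin|/ε) * (zs (Sum.inl (Sum.inr l)) - zs (Sum.inl (Sum.inl l))))
          + (|Amin|/ε) * ((zs (Sum.inl (Sum.inl l)) - zs (Sum.inl (Sum.inr l))) * xs l)))
        + zs (Sum.inr ()) * |Amin| from by rw [Finset.sum_add_distrib]; ring]
  congr 1
  refine Finset.sum_congr rfl fun l _ => ?_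
  ring

theorem stmt_4 {n : ℕ} (A : Matrix (Fin n) (Fin n) ℝ) (hsym : A.IsSymm)
    (hentries : ∀ i j, A i j ≤ -1)
    (Amin : ℝ) (hAmin : IsLeast {r : ℝ | ∃ i j, A i j = r} Amin)
    (ε : ℝ) (hε : 0 < ε) (hε10 : ε ≤ 1 / 10)
    (xs ys : Fin n → ℝ) (zs : AdvIdx n → ℝ)
    (hxs : xs ∈ stdSimplex ℝ (Fin n)) (hys : ys ∈ stdSimplex ℝ (Fin n))
    (hzs : zs ∈ stdSimplex ℝ (AdvIdx n))
    (hNashx : ∀ x' ∈ stdSimplex ℝ (Fin n),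
      advUtil A Amin ε xs ys zs ≤ advUtil A Amin ε x' ys zs + ε ^ 2)
    (hNashy : ∀ y' ∈ stdSimplex ℝ (Fin n),
      advUtil A Amin ε xs ys zs ≤ advUtil A Amin ε xs y' zs + ε ^ 2)
    (hNashz : ∀ z' ∈ stdSimplex ℝ (AdvIdx n),
      advUtil A Amin ε xs ys z' ≤ advUtil A Amin ε xs ys zs + ε ^ 2) :
    (∀ j : Fin n ⊕ Fin n, zs (Sum.inl j) ≤ 9 * ε) ∧
      zs (Sum.inr ()) ≥ 1 - 18 * n * ε := by
  obtain ⟨hx0, hx1⟩ := hxs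
  obtain ⟨hy0, hy1⟩ := hys
  obtain ⟨hz0, hz1⟩ := hzs
  obtain ⟨⟨i0, j0, hA0⟩, hlb⟩ := hAmin
  have hn : 0 < n := i0.pos
  have hA1 : Amin ≤ -1 := hA0 ▸ hentries i0 j0
  have habs : |Amin| = -Amin := abs_of_neg (by linarith)
  have hM1 : (1:ℝ) ≤ |Amin| := by rw [habs]; linarith
  have hMpos : (0:ℝ) < |Amin| := by linarith
  have hAlb : ∀ i j, Amin ≤ A i j := fun i j => hlb ⟨i, j, rfl⟩
  -- adversary deviation bounds
  have hZl : ∀ k, |Amin| * (zs (Sum.inl (Sum.inl k)) * (ε - (xs k - ys k))) ≤ ε^3 := by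
    intro k
    have h := hNashz _ (zmove_mem zs ⟨hz0, hz1⟩ (Sum.inl (Sum.inl k)))
    rw [adv_move_l] at h
    have h2 : zs (Sum.inl (Sum.inl k)) * |Amin|
        - |Amin|/ε * (zs (Sum.inl (Sum.inl k)) * (xs k - ys k)) ≤ ε^2 := by linarith
    have h3 := mul_le_mul_of_nonneg_right h2 hε.le
    have h4 : (zs (Sum.inl (Sum.inl k)) * |Amin|
        - |Amin|/ε * (zs (Sum.inl (Sum.inl k)) * (xs k - ys k))) * ε
        = |Amin| * (zs (Sum.inl (Sum.inl k)) * (ε - (xs k - ys k))) := by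
      field_simp
    rw [h4] at h3
    calc |Amin| * (zs (Sum.inl (Sum.inl k)) * (ε - (xs k - ys k))) ≤ ε^2 * ε := h3
    _ = ε^3 := by ring
  have hZr : ∀ k, |Amin| * (zs (Sum.inl (Sum.inr k)) * (ε + (xs k - ys k))) ≤ ε^3 := by
    intro k
    have h := hNashz _ (zmove_mem zs ⟨hz0, hz1⟩ (Sum.inl (Sum.inr k)))
    rw [adv_move_r] at h
    have h2 : zs (Sum.inl (Sum.inr k)) * |Amin|
        - |Amin|/ε * (zs (Sum.inl (Sum.inr k)) * (ys k - xs k)) ≤ ε^2 := by linarith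
    have h3 := mul_le_mul_of_nonneg_right h2 hε.le
    have h4 : (zs (Sum.inl (Sum.inr k)) * |Amin|
        - |Amin|/ε * (zs (Sum.inl (Sum.inr k)) * (ys k - xs k))) * ε
        = |Amin| * (zs (Sum.inl (Sum.inr k)) * (ε + (xs k - ys k))) := by
      field_simp; ring
    rw [h4] at h3
    calc |Amin| * (zs (Sum.inl (Sum.inr k)) * (ε + (xs k - ys k))) ≤ ε^2 * ε := h3
    _ = ε^3 := by ring
  -- coefficient bounds
  have hax1 : ∀ i, -|Amin| ≤ A.mulVec ys i := by
    intro i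
    have he : A.mulVec ys i = ∑ l, A i l * ys l := by
      simp [Matrix.mulVec, dotProduct]
    have h : Amin ≤ ∑ l, A i l * ys l := by
      calc Amin = ∑ l, Amin * ys l := by rw [← Finset.mul_sum, hy1, mul_one]
      _ ≤ ∑ l, A i l * ys l :=
        Finset.sum_le_sum fun l _ => mul_le_mul_of_nonneg_right (hAlb i l) (hy0 l)
    rw [he, habs]; linarith
  have hax2 : ∀ i, A.mulVec ys i ≤ -1 := by
    intro i
    have he : A.mulVec ys i = ∑ l, A i l * ys l := by
      simp [Matrix.mulVec, dotProduct]
    have h : ∑ l, A i l * ys l ≤ -1 := by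
      calc ∑ l, A i l * ys l ≤ ∑ l, (-1) * ys l :=
        Finset.sum_le_sum fun l _ => mul_le_mul_of_nonneg_right (hentries i l) (hy0 l)
      _ = -1 := by rw [← Finset.mul_sum, hy1, mul_one]
    rw [he]; linarith
  have hay1 : ∀ l, -|Amin| ≤ ∑ i, xs i * A i l := by
    intro l
    have h : Amin ≤ ∑ i, xs i * A i l := by
      calc Amin = ∑ i, xs i * Amin := by rw [← Finset.sum_mul, hx1, one_mul]
      _ ≤ ∑ i, xs i * A i l :=
        Finset.sum_le_sum fun i _ => mul_le_mul_of_nonneg_left (hAlb i l) (hx0 i)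
    rw [habs]; linarith
  have hay2 : ∀ l, (∑ i, xs i * A i l) ≤ -1 := by
    intro l
    calc ∑ i, xs i * A i l ≤ ∑ i, xs i * (-1) :=
      Finset.sum_le_sum fun i _ => mul_le_mul_of_nonneg_left (hentries i l) (hx0 i)
    _ = -1 := by rw [← Finset.sum_mul, hx1, one_mul]
  -- main claim
  have hmain : ∀ j : Fin n ⊕ Fin n, zs (Sum.inl j) ≤ 9 * ε := by
    intro j
    by_contra hc
    push_neg at hc
    cases j with
    | inl j =>
      refine core_contra hn ε |Amin| hε hε10 hM1 xs ys
        (fun i => zs (Sum.inl (Sum.inl i))) (fun i => zs (Sum.inl (Sum.inr i)))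
        (fun i => A.mulVec ys i)
        (fun i => A.mulVec ys i + (|Amin|/ε) * (zs (Sum.inl (Sum.inl i)) - zs (Sum.inl (Sum.inr i))))
        hx0 hx1 hy0 hy1 (fun i => hz0 _) hZl hZr hax1 hax2 (fun k => rfl) ?_ j hc
      intro k
      have h := hNashx _ (single_mem_stdSimplex ℝ k)
      rw [repr_x A Amin ε ys zs xs, repr_x A Amin ε ys zs (Pi.single k 1), single_dot] at h
      linarith
    | inr j =>
      refine core_contra hn ε |Amin| hε hε10 hM1 ys xs
        (fun i => zs (Sum.inl (Sum.inr i))) (fun i => zs (Sum.inl (Sum.inl i)))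
        (fun l => ∑ i, xs i * A i l)
        (fun l => (∑ i, xs i * A i l) + (|Amin|/ε) * (zs (Sum.inl (Sum.inr l)) - zs (Sum.inl (Sum.inl l))))
        hy0 hy1 hx0 hx1 (fun i => hz0 _) ?_ ?_ hay1 hay2 (fun k => rfl) ?_ j hc
      · intro k
        have e : |Amin| * (zs (Sum.inl (Sum.inr k)) * (ε - (ys k - xs k)))
            = |Amin| * (zs (Sum.inl (Sum.inr k)) * (ε + (xs k - ys k))) := by ring
        rw [e]; exact hZr k
      · intro k
        have e : |Amin| * (zs (Sum.inl (Sum.inl k)) * (ε + (ys k - xs k)))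
            = |Amin| * (zs (Sum.inl (Sum.inl k)) * (ε - (xs k - ys k))) := by ring
        rw [e]; exact hZl k
      · intro k
        have h := hNashy _ (single_mem_stdSimplex ℝ k)
        rw [repr_y A Amin ε xs zs ys, repr_y A Amin ε xs zs (Pi.single k 1), single_dot] at h
        linarith
  refine ⟨hmain, ?_⟩
  have hz1' := hz1
  rw [Fintype.sum_sum_type] at hz1'
  have hunit : ∑ b : Unit, zs (Sum.inr b) = zs (Sum.inr ()) := by simp
  rw [hunit] at hz1'
  have hb : ∑ a : Fin n ⊕ Fin n, zs (Sum.inl a) ≤ ∑ _a : Fin n ⊕ Fin n, 9 * ε :=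
    Finset.sum_le_sum fun a _ => hmain a
  have hcard : ∑ _a : Fin n ⊕ Fin n, (9 * ε : ℝ) = (n + n : ℕ) * (9 * ε) := by
    simp [Finset.sum_const, Finset.card_univ, nsmul_eq_mul]
  rw [hcard] at hb
  have : ((n + n : ℕ) : ℝ) * (9 * ε) = 18 * n * ε := by push_cast; ring
  rw [this] at hb
  linarith
end

section
/- Let A = Aᵀ ∈ ℝ^{n×n} have all entries ≤ −1 with minimum entry A_min, and consider the 3-player adversarial team game with adversary utility u(x,y,z) = ⟨x, A y⟩ + (|A_min|/ε) Σᵢ (z_i(x_i − y_i) + z_{n+i}(y_i − x_i)) + z_{2n+1}|A_min|. If (x*, y*, z*) is an ε²-Nash equilibrium with ε ≤ 1/10, then (y*, y*) is a symmetric (21n+1)|A_min|ε-Nash equilibrium of the two-player identical-payoff symmetric game (A, A): for all y' ∈ Δⁿ, ⟨y*, A y*⟩ ≤ ⟨y', A y*⟩ + (21n+1)|A_min|ε. -/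
open Matrix Finset

lemma ind_mem_simplex {ι : Type*} [Fintype ι] [DecidableEq ι] (j0 : ι) :
    (fun j => if j = j0 then (1:ℝ) else 0) ∈ stdSimplex ℝ ι := by
  constructor
  · intro j; dsimp only; split <;> norm_num
  · simp [Finset.sum_ite_eq']

theorem stmt_5 {n : ℕ} (A : Matrix (Fin n) (Fin n) ℝ) (hsym : A.IsSymm)
    (hentries : ∀ i j, A i j ≤ -1)
    (Amin : ℝ) (hAmin : IsLeast {r : ℝ | ∃ i j, A i j = r} Amin)
    (ε : ℝ) (hε : 0 < ε) (hε10 : ε ≤ 1 / 10)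
    (xs ys : Fin n → ℝ) (zs : AdvIdx n → ℝ)
    (hxs : xs ∈ stdSimplex ℝ (Fin n)) (hys : ys ∈ stdSimplex ℝ (Fin n))
    (hzs : zs ∈ stdSimplex ℝ (AdvIdx n))
    (hNashx : ∀ x' ∈ stdSimplex ℝ (Fin n),
      advUtil A Amin ε xs ys zs ≤ advUtil A Amin ε x' ys zs + ε ^ 2)
    (hNashy : ∀ y' ∈ stdSimplex ℝ (Fin n),
      advUtil A Amin ε xs ys zs ≤ advUtil A Amin ε xs y' zs + ε ^ 2)
    (hNashz : ∀ z' ∈ stdSimplex ℝ (AdvIdx n),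
      advUtil A Amin ε xs ys z' ≤ advUtil A Amin ε xs ys zs + ε ^ 2) :
    ∀ y' ∈ stdSimplex ℝ (Fin n),
      ys ⬝ᵥ A.mulVec ys ≤ y' ⬝ᵥ A.mulVec ys + (21 * n + 1) * |Amin| * ε := by
  intro y' hy'
  obtain ⟨i0, j0, hij0⟩ := hAmin.1
  have hA1 : Amin ≤ -1 := by rw [← hij0]; exact hentries i0 j0
  have hMeq : |Amin| = -Amin := abs_of_neg (by linarith)
  set M : ℝ := |Amin| with hMdef
  have hM1 : (1:ℝ) ≤ M := by rw [hMeq]; linarith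
  have hM0 : (0:ℝ) < M := by linarith
  have hlow : ∀ i j, Amin ≤ A i j := fun i j => hAmin.2 ⟨i, j, rfl⟩
  have habsA : ∀ i j, |A i j| ≤ M := by
    intro i j
    rw [abs_of_neg (by linarith [hentries i j] : A i j < 0), hMeq]
    linarith [hlow i j]
  -- bounds on mulVec entries
  have hmv : ∀ w ∈ stdSimplex ℝ (Fin n), ∀ i, Amin ≤ A.mulVec w i ∧ A.mulVec w i ≤ -1 := by
    intro w hw i
    have hw1 : ∑ j, w j = 1 := hw.2
    have hw0 : ∀ j, 0 ≤ w j := hw.1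
    have hmve : A.mulVec w i = ∑ j, A i j * w j := rfl
    constructor
    · rw [hmve]
      calc Amin = ∑ j, Amin * w j := by rw [← Finset.mul_sum, hw1, mul_one]
        _ ≤ ∑ j, A i j * w j :=
          Finset.sum_le_sum fun j _ => mul_le_mul_of_nonneg_right (hlow i j) (hw0 j)
    · rw [hmve]
      calc ∑ j, A i j * w j ≤ ∑ j, (-1) * w j :=
          Finset.sum_le_sum fun j _ => mul_le_mul_of_nonneg_right (hentries i j) (hw0 j)
        _ = -1 := by rw [← Finset.mul_sum, hw1, mul_one]
  have hmvabs : ∀ w ∈ stdSimplex ℝ (Fin n), ∀ i, |A.mulVec w i| ≤ M := by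
    intro w hw i
    obtain ⟨h1, h2⟩ := hmv w hw i
    rw [abs_of_neg (by linarith), hMeq]; linarith
  -- bounds on bilinear form values
  have hdot : ∀ v ∈ stdSimplex ℝ (Fin n), ∀ w ∈ stdSimplex ℝ (Fin n),
      Amin ≤ v ⬝ᵥ A.mulVec w ∧ v ⬝ᵥ A.mulVec w ≤ -1 := by
    intro v hv w hw
    have hv1 : ∑ j, v j = 1 := hv.2
    have hv0 : ∀ j, 0 ≤ v j := hv.1
    have hde : v ⬝ᵥ A.mulVec w = ∑ i, v i * A.mulVec w i := rfl
    constructor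
    · rw [hde]
      calc Amin = ∑ i, v i * Amin := by rw [← Finset.sum_mul, hv1, one_mul]
        _ ≤ ∑ i, v i * A.mulVec w i :=
          Finset.sum_le_sum fun i _ => mul_le_mul_of_nonneg_left (hmv w hw i).1 (hv0 i)
    · rw [hde]
      calc ∑ i, v i * A.mulVec w i ≤ ∑ i, v i * (-1) :=
          Finset.sum_le_sum fun i _ => mul_le_mul_of_nonneg_left (hmv w hw i).2 (hv0 i)
        _ = -1 := by rw [← Finset.sum_mul, hv1, one_mul]
  -- abbreviations
  set D : ℝ := ∑ i : Fin n,
      (zs (Sum.inl (Sum.inl i)) * (xs i - ys i) + zs (Sum.inl (Sum.inr i)) * (ys i - xs i))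
    with hD
  set zl : ℝ := zs (Sum.inr ()) with hzl
  have hzl1 : zl ≤ 1 := by
    rw [hzl, ← hzs.2]
    exact Finset.single_le_sum (fun j _ => hzs.1 j) (Finset.mem_univ _)
  -- (A1) : deviation x' = ys
  have hA1' : xs ⬝ᵥ A.mulVec ys + (M / ε) * D ≤ ys ⬝ᵥ A.mulVec ys + ε ^ 2 := by
    have h1 := hNashx ys hys
    simp only [advUtil, sub_self, mul_zero, add_zero, zero_add, Finset.sum_const_zero] at h1
    rw [← hMdef, ← hD, ← hzl] at h1
    linarith
  -- (A2) : adversary deviation to the last action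
  have hA2 : M ≤ (M / ε) * D + zl * M + ε ^ 2 := by
    have h2 := hNashz _ (ind_mem_simplex (Sum.inr () : AdvIdx n))
    simp only [advUtil, reduceCtorEq, if_false, if_true, zero_mul, add_zero, zero_add,
      mul_zero, Finset.sum_const_zero, one_mul] at h2
    rw [← hMdef, ← hD, ← hzl] at h2
    linarith
  have hDlow : -(ε ^ 2) ≤ (M / ε) * D := by nlinarith
  -- per-coordinate closeness
  have hdiff : ∀ i, |xs i - ys i| ≤ 3 * ε := by
    intro i
    have hub : ys ⬝ᵥ A.mulVec ys - xs ⬝ᵥ A.mulVec ys ≤ M - 1 := by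
      have h1 := (hdot ys hys ys hys).2
      have h2 := (hdot xs hxs ys hys).1
      rw [hMeq]; linarith
    have key : ∀ d : ℝ, (M / ε) * d ≤ (M / ε) * D + zl * M + ε ^ 2 → d ≤ 3 * ε := by
      intro d hd
      have h3 : (M / ε) * d ≤ 2 * M + 2 * ε ^ 2 := by nlinarith
      have h4 : M * d ≤ (2 * M + 2 * ε ^ 2) * ε := by
        have := mul_le_mul_of_nonneg_right h3 hε.le
        calc M * d = (M / ε) * d * ε := by field_simp
          _ ≤ (2 * M + 2 * ε ^ 2) * ε := this
      nlinarith
    have hli : (M / ε) * (xs i - ys i) ≤ (M / ε) * D + zl * M + ε ^ 2 := by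
      have h := hNashz _ (ind_mem_simplex (Sum.inl (Sum.inl i) : AdvIdx n))
      simp only [advUtil, Sum.inl.injEq, reduceCtorEq, if_false, ite_mul, one_mul, zero_mul,
        add_zero, zero_add, Finset.sum_ite_eq', Finset.mem_univ, if_true] at h
      rw [← hMdef, ← hD, ← hzl] at h
      linarith
    have hri : (M / ε) * (ys i - xs i) ≤ (M / ε) * D + zl * M + ε ^ 2 := by
      have h := hNashz _ (ind_mem_simplex (Sum.inl (Sum.inr i) : AdvIdx n))
      simp only [advUtil, Sum.inl.injEq, Sum.inr.injEq, reduceCtorEq, if_false, ite_mul,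
        one_mul, zero_mul, add_zero, zero_add, Finset.sum_ite_eq', Finset.mem_univ,
        if_true] at h
      rw [← hMdef, ← hD, ← hzl] at h
      linarith
    refine abs_le.mpr ⟨?_, key _ hli⟩
    have := key _ hri
    linarith
  have hsumabs : ∑ j, |xs j - ys j| ≤ 3 * n * ε := by
    calc ∑ j, |xs j - ys j| ≤ ∑ _j : Fin n, 3 * ε := Finset.sum_le_sum fun j _ => hdiff j
      _ = n * (3 * ε) := by
          rw [Finset.sum_const, Finset.card_univ, Fintype.card_fin, nsmul_eq_mul]
      _ = 3 * n * ε := by ring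
  -- (E1)
  have hE1 : ys ⬝ᵥ A.mulVec ys ≤ xs ⬝ᵥ A.mulVec ys + 3 * n * ε * M := by
    have hexp : ys ⬝ᵥ A.mulVec ys - xs ⬝ᵥ A.mulVec ys
        = ∑ i, (ys i - xs i) * A.mulVec ys i := by
      simp [dotProduct, sub_mul, Finset.sum_sub_distrib]
    have hle : ∑ i, (ys i - xs i) * A.mulVec ys i ≤ ∑ _i : Fin n, 3 * ε * M :=
      Finset.sum_le_sum fun i _ => by
        calc (ys i - xs i) * A.mulVec ys i ≤ |(ys i - xs i) * A.mulVec ys i| := le_abs_self _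
          _ = |ys i - xs i| * |A.mulVec ys i| := abs_mul _ _
          _ ≤ 3 * ε * M := by
              apply mul_le_mul _ (hmvabs ys hys i) (abs_nonneg _) (by positivity)
              rw [abs_sub_comm]; exact hdiff i
    have hc : ∑ _i : Fin n, 3 * ε * M = 3 * n * ε * M := by
      rw [Finset.sum_const, Finset.card_univ, Fintype.card_fin, nsmul_eq_mul]; ring
    linarith [hexp ▸ (hc ▸ hle)]
  -- (E2)
  have hswap : xs ⬝ᵥ A.mulVec y' = y' ⬝ᵥ A.mulVec xs := by
    rw [Matrix.dotProduct_mulVec, ← Matrix.mulVec_transpose, hsym, dotProduct_comm]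
  have hrow : ∀ i, A.mulVec xs i - A.mulVec ys i ≤ 3 * n * ε * M := by
    intro i
    have hexp : A.mulVec xs i - A.mulVec ys i = ∑ j, A i j * (xs j - ys j) := by
      simp [Matrix.mulVec, dotProduct, mul_sub, Finset.sum_sub_distrib]
    rw [hexp]
    calc ∑ j, A i j * (xs j - ys j) ≤ ∑ j, |A i j * (xs j - ys j)| :=
        Finset.sum_le_sum fun _ _ => le_abs_self _
      _ = ∑ j, |A i j| * |xs j - ys j| := by simp [abs_mul]
      _ ≤ ∑ j, M * |xs j - ys j| :=
        Finset.sum_le_sum fun j _ => mul_le_mul_of_nonneg_right (habsA i j) (abs_nonneg _)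
      _ = M * ∑ j, |xs j - ys j| := by rw [Finset.mul_sum]
      _ ≤ M * (3 * n * ε) := mul_le_mul_of_nonneg_left hsumabs hM0.le
      _ = 3 * n * ε * M := by ring
  have hE2 : xs ⬝ᵥ A.mulVec y' ≤ y' ⬝ᵥ A.mulVec ys + 3 * n * ε * M := by
    rw [hswap]
    have hexp : y' ⬝ᵥ A.mulVec xs - y' ⬝ᵥ A.mulVec ys
        = ∑ i, y' i * (A.mulVec xs i - A.mulVec ys i) := by
      simp [dotProduct, mul_sub, Finset.sum_sub_distrib]
    have hle : ∑ i, y' i * (A.mulVec xs i - A.mulVec ys i) ≤ 3 * n * ε * M := by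
      calc ∑ i, y' i * (A.mulVec xs i - A.mulVec ys i)
          ≤ ∑ i, y' i * (3 * n * ε * M) :=
            Finset.sum_le_sum fun i _ => mul_le_mul_of_nonneg_left (hrow i) (hy'.1 i)
        _ = (∑ i, y' i) * (3 * n * ε * M) := by rw [← Finset.sum_mul]
        _ = 3 * n * ε * M := by rw [hy'.2, one_mul]
    linarith [hexp ▸ hle]
  -- (B) : the two team deviations towards y'
  have hB : 2 * (xs ⬝ᵥ A.mulVec ys) + (M / ε) * D
      ≤ y' ⬝ᵥ A.mulVec ys + xs ⬝ᵥ A.mulVec y' + 2 * ε ^ 2 := by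
    have h3 := hNashx y' hy'
    have h4 := hNashy y' hy'
    simp only [advUtil] at h3 h4
    rw [← hMdef, ← hD, ← hzl] at h3 h4
    set S3 := ∑ i : Fin n,
        (zs (Sum.inl (Sum.inl i)) * (y' i - ys i) + zs (Sum.inl (Sum.inr i)) * (ys i - y' i))
      with hS3
    set S4 := ∑ i : Fin n,
        (zs (Sum.inl (Sum.inl i)) * (xs i - y' i) + zs (Sum.inl (Sum.inr i)) * (y' i - xs i))
      with hS4
    have hsum : (M / ε) * S3 + (M / ε) * S4 = (M / ε) * D := by
      rw [← mul_add]
      congr 1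
      rw [hS3, hS4, hD, ← Finset.sum_add_distrib]
      exact Finset.sum_congr rfl fun i _ => by ring
    linarith
  -- combine everything
  have hsq : 3 * ε ^ 2 ≤ 2 * M * ε := by nlinarith
  have hnM : (0:ℝ) ≤ (n:ℝ) * ε * M := by positivity
  have h2g : 2 * (ys ⬝ᵥ A.mulVec ys)
      ≤ 2 * (y' ⬝ᵥ A.mulVec ys) + 9 * n * ε * M + 3 * ε ^ 2 := by linarith
  have hcast : (21 * (n:ℝ) + 1) * M * ε = 21 * ((n:ℝ) * ε * M) + M * ε := by ring
  rw [hcast]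
  linarith
end

section
/- Define v(y₂) = (109 + 5890·y₂ + 3000·y₂²)/(110 + 6000·y₂) for y₂ ∈ [0,1]. Then v is strictly convex on [0,1] and attains its unique minimum at y₂ = (9√3 − 11)/600, which is an irrational number. -/
noncomputable def vfun (y : ℝ) : ℝ :=
  (109 + 5890 * y + 3000 * y ^ 2) / (110 + 6000 * y)

theorem stmt_6 :
    StrictConvexOn ℝ (Set.Icc (0 : ℝ) 1) vfun ∧
    ((9 * Real.sqrt 3 - 11) / 600 ∈ Set.Icc (0 : ℝ) 1) ∧
    (∀ y ∈ Set.Icc (0 : ℝ) 1, y ≠ (9 * Real.sqrt 3 - 11) / 600 →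
      vfun ((9 * Real.sqrt 3 - 11) / 600) < vfun y) ∧
    Irrational ((9 * Real.sqrt 3 - 11) / 600) := by
  have hs : Real.sqrt 3 ^ 2 = 3 := Real.sq_sqrt (by norm_num)
  have hs0 : 0 ≤ Real.sqrt 3 := Real.sqrt_nonneg 3
  set s := Real.sqrt 3 with hsdef
  refine ⟨?_, ?_, ?_, ?_⟩
  · -- strict convexity
    refine ⟨convex_Icc 0 1, ?_⟩
    intro x hx y hy hxy a b ha hb hab
    have hdx : (0:ℝ) < 110 + 6000*x := by nlinarith [hx.1]
    have hdy : (0:ℝ) < 110 + 6000*y := by nlinarith [hy.1]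
    have hdz : (0:ℝ) < 110 + 6000*(a*x + b*y) := by
      nlinarith [mul_nonneg ha.le hx.1, mul_nonneg hb.le hy.1]
    simp only [vfun, smul_eq_mul]
    rw [div_lt_iff₀ hdz]
    have key : a * ((109 + 5890 * x + 3000 * x ^ 2) / (110 + 6000 * x)) +
        b * ((109 + 5890 * y + 3000 * y ^ 2) / (110 + 6000 * y)) =
        (a * (109 + 5890 * x + 3000 * x ^ 2) * (110 + 6000*y) +
         b * (109 + 5890 * y + 3000 * y ^ 2) * (110 + 6000*x)) /
           ((110 + 6000*x)*(110+6000*y)) := by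
      rw [mul_div_assoc', mul_div_assoc', div_add_div _ _ hdx.ne' hdy.ne']
      ring
    rw [key, div_mul_eq_mul_div, lt_div_iff₀ (by positivity)]
    have hb' : b = 1 - a := by linarith
    subst hb'
    have hsq : 0 < (x - y)^2 := by
      have : x - y ≠ 0 := sub_ne_zero.mpr hxy
      positivity
    nlinarith [mul_pos (mul_pos ha hb) hsq]
  · -- membership
    constructor <;> nlinarith [hs, hs0]
  · -- strict minimum
    have hvm : vfun ((9 * s - 11) / 600) = 3 * s / 200 + 289 / 300 := by
      have hds : (0:ℝ) < 90 * s := by nlinarith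
      have hd : 110 + 6000 * ((9 * s - 11) / 600) = 90 * s := by ring
      rw [vfun, hd, div_eq_iff hds.ne']
      nlinarith [hs]
    intro y hy hne
    have hdy : (0:ℝ) < 110 + 6000 * y := by nlinarith [hy.1]
    have hne' : 110 + 6000 * y - 90 * s ≠ 0 := by
      intro h
      exact hne (by linarith)
    have hsq : 0 < (110 + 6000 * y - 90 * s) ^ 2 := by positivity
    rw [hvm, vfun, lt_div_iff₀ hdy]
    nlinarith [hs, hsq]
  · -- irrationality
    have irr3 : Irrational (Real.sqrt 3) := by
      simpa using (Nat.prime_three).irrational_sqrt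
    have h : (9 * s - 11) / 600 = (9/600 : ℚ) * s - (11/600 : ℚ) := by
      push_cast; ring
    rw [h]
    exact ((show Irrational s from irr3).ratCast_mul (q := 9/600) (by norm_num)).sub_ratCast _
end

section
/- Let G be a graph on n vertices with maximum clique size k ≥ 10, let δ ∈ (0,1), and define Ā ∈ ℝ^{n×n} by Ā_{ii} = δ, Ā_{ij} = 1 if {i,j} ∈ E, and Ā_{ij} = 0 otherwise. Let C_k be a clique of size k and suppose (x̂, x̂) is a symmetric ε-well-supported Nash equilibrium of the identical-payoff game (Ā, Ā) with support contained in C_k. Then, with x* = (1/k)Σ_{i∈C_k} e_i: (i) ‖x̂ − x*‖_∞ ≤ ((k − δ)/(1 − δ))·ε, and (ii) ⟨x̂, Ā x̂⟩ ≥ 1 − 1/k + δ/k − ((k − δ)/(1 − δ))·ε. -/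
open Matrix Finset

theorem stmt_14 {n k : ℕ} (hk : 10 ≤ k) (G : SimpleGraph (Fin n)) [DecidableRel G.Adj]
    (hmax : ∀ S : Finset (Fin n), G.IsClique (S : Set (Fin n)) → S.card ≤ k)
    (C : Finset (Fin n)) (hC : G.IsClique (C : Set (Fin n))) (hCk : C.card = k)
    (δ : ℝ) (hδ : δ ∈ Set.Ioo (0 : ℝ) 1)
    (Abar : Matrix (Fin n) (Fin n) ℝ)
    (hAbar : ∀ i j, Abar i j = if i = j then δ else if G.Adj i j then 1 else 0)
    (ε : ℝ) (xhat : Fin n → ℝ) (hxhat : xhat ∈ stdSimplex ℝ (Fin n))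
    (hws : ∀ i, 0 < xhat i → ∀ j, (Abar.mulVec xhat) j - ε ≤ (Abar.mulVec xhat) i)
    (hsupp : ∀ i, 0 < xhat i → i ∈ C)
    (xs : Fin n → ℝ) (hxs : xs = fun i => if i ∈ C then (1 : ℝ) / k else 0) :
    (∀ i, |xhat i - xs i| ≤ ((k - δ) / (1 - δ)) * ε) ∧
    xhat ⬝ᵥ Abar.mulVec xhat ≥ 1 - 1 / k + δ / k - ((k - δ) / (1 - δ)) * ε := by
  subst hxs
  obtain ⟨hδ0, hδ1⟩ := hδ
  have h1 : (0:ℝ) < 1 - δ := by linarith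
  have hnn : ∀ i, 0 ≤ xhat i := hxhat.1
  have hsum : ∑ i, xhat i = 1 := hxhat.2
  have hk10 : (10:ℝ) ≤ (k:ℝ) := by exact_mod_cast hk
  have hkpos : (0:ℝ) < (k:ℝ) := by linarith
  have hzero : ∀ j, j ∉ C → xhat j = 0 := by
    intro j hj
    by_contra h
    exact hj (hsupp j (lt_of_le_of_ne (hnn j) (Ne.symm h)))
  have hsumC : ∑ j ∈ C, xhat j = 1 := by
    exact (Finset.sum_subset (Finset.subset_univ C) (fun j _ hj => hzero j hj)).trans hsum
  -- mulVec formula on C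
  have hmul : ∀ i ∈ C, Abar.mulVec xhat i = 1 - (1 - δ) * xhat i := by
    intro i hi
    have e1 : Abar.mulVec xhat i = ∑ j ∈ C, Abar i j * xhat j := by
      rw [Matrix.mulVec, dotProduct]
      exact (Finset.sum_subset (Finset.subset_univ C)
        (fun j _ hj => by rw [hzero j hj, mul_zero])).symm
    have e2 : ∑ j ∈ C, Abar i j * xhat j
        = Abar i i * xhat i + ∑ j ∈ C.erase i, Abar i j * xhat j :=
      (Finset.add_sum_erase C _ hi).symm
    have e3 : ∀ j ∈ C.erase i, Abar i j * xhat j = xhat j := by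
      intro j hj
      have hji := Finset.ne_of_mem_erase hj
      have hjC := Finset.mem_of_mem_erase hj
      have hadj : G.Adj i j := hC hi hjC (Ne.symm hji)
      rw [hAbar, if_neg (Ne.symm hji), if_pos hadj, one_mul]
    have e4 : ∑ j ∈ C.erase i, xhat j = 1 - xhat i := by
      rw [Finset.sum_erase_eq_sub hi, hsumC]
    rw [e1, e2, Finset.sum_congr rfl e3, e4, hAbar, if_pos rfl]
    ring
  -- ε ≥ 0
  have hε : 0 ≤ ε := by
    have : ∃ i, 0 < xhat i := by
      by_contra h
      push_neg at h
      have h0 : ∀ i, xhat i = 0 := fun i => le_antisymm (h i) (hnn i)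
      rw [Finset.sum_congr rfl (fun i _ => h0 i), Finset.sum_const_zero] at hsum
      norm_num at hsum
    obtain ⟨i, hi⟩ := this
    have := hws i hi i
    linarith
  -- gap bound
  have hgap : ∀ i ∈ C, ∀ j ∈ C, xhat i ≤ xhat j + ε / (1 - δ) := by
    intro i hi j hj
    rcases lt_or_ge 0 (xhat i) with hpos | hle
    · have h := hws i hpos j
      rw [hmul i hi, hmul j hj] at h
      have h2 : (xhat i - xhat j) * (1 - δ) ≤ ε := by nlinarith
      have h3 : xhat i - xhat j ≤ ε / (1 - δ) := (le_div_iff₀ h1).2 h2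
      linarith
    · have h0 : xhat i = 0 := le_antisymm hle (hnn i)
      have : 0 ≤ ε / (1 - δ) := div_nonneg hε h1.le
      rw [h0]
      linarith [hnn j]
  -- ε/(1-δ) ≤ B
  have hB : ε / (1 - δ) ≤ ((k:ℝ) - δ) / (1 - δ) * ε := by
    rw [div_mul_eq_mul_div, div_le_div_iff₀ h1 h1]
    nlinarith [mul_nonneg (mul_nonneg (by linarith : (0:ℝ) ≤ (k:ℝ) - δ - 1) hε) h1.le]
  have hBnn : 0 ≤ ((k:ℝ) - δ) / (1 - δ) * ε :=
    mul_nonneg (div_nonneg (by linarith) h1.le) hε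
  -- average facts
  have hCne : C.Nonempty := Finset.card_pos.mp (by omega)
  have hconst : ∑ _j ∈ C, (1:ℝ)/k = 1 := by
    rw [Finset.sum_const, hCk, nsmul_eq_mul, mul_one_div, div_self hkpos.ne']
  have hlow : ∃ j ∈ C, xhat j ≤ 1/k := by
    apply Finset.exists_le_of_sum_le hCne
    rw [hsumC, hconst]
  have hhigh : ∃ j ∈ C, (1:ℝ)/k ≤ xhat j := by
    apply Finset.exists_le_of_sum_le hCne
    rw [hsumC, hconst]
  -- part (i)
  have part1 : ∀ i, |xhat i - (if i ∈ C then (1:ℝ)/k else 0)| ≤ ((k:ℝ) - δ) / (1 - δ) * ε := by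
    intro i
    by_cases hi : i ∈ C
    · rw [if_pos hi, abs_le]
      obtain ⟨j1, hj1C, hj1⟩ := hlow
      obtain ⟨j2, hj2C, hj2⟩ := hhigh
      constructor
      · linarith [hgap j2 hj2C i hi]
      · linarith [hgap i hi j1 hj1C]
    · rw [if_neg hi, hzero i hi]
      simpa using hBnn
  refine ⟨part1, ?_⟩
  -- part (ii)
  have hub : ∀ i ∈ C, xhat i ≤ 1/k + ((k:ℝ) - δ) / (1 - δ) * ε := by
    intro i hi
    have := part1 i
    rw [if_pos hi, abs_le] at this
    linarith [this.2]
  have hdot : xhat ⬝ᵥ Abar.mulVec xhat = ∑ i ∈ C, xhat i * (1 - (1 - δ) * xhat i) := by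
    rw [dotProduct]
    rw [← Finset.sum_subset (Finset.subset_univ C)
      (fun j _ hj => by rw [hzero j hj, zero_mul])]
    exact Finset.sum_congr rfl (fun i hi => by rw [hmul i hi])
  have hexpand : ∑ i ∈ C, xhat i * (1 - (1 - δ) * xhat i)
      = 1 - (1 - δ) * ∑ i ∈ C, xhat i * xhat i := by
    have e : ∀ i ∈ C, xhat i * (1 - (1 - δ) * xhat i)
        = xhat i - (1 - δ) * (xhat i * xhat i) := fun i _ => by ring
    rw [Finset.sum_congr rfl e, Finset.sum_sub_distrib, ← Finset.mul_sum, hsumC]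
  have hS : ∑ i ∈ C, xhat i * xhat i ≤ 1/k + ((k:ℝ) - δ) / (1 - δ) * ε := by
    calc ∑ i ∈ C, xhat i * xhat i
        ≤ ∑ i ∈ C, xhat i * (1/k + ((k:ℝ) - δ) / (1 - δ) * ε) :=
          Finset.sum_le_sum (fun i hi => mul_le_mul_of_nonneg_left (hub i hi) (hnn i))
      _ = 1/k + ((k:ℝ) - δ) / (1 - δ) * ε := by
          rw [← Finset.sum_mul, hsumC, one_mul]
  rw [ge_iff_le, hdot, hexpand]
  have e5 : (1 - δ) * (1/(k:ℝ) + ((k:ℝ) - δ) / (1 - δ) * ε)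
      = 1/(k:ℝ) - δ/(k:ℝ) + ((k:ℝ) - δ) / (1 - δ) * ε
        - δ * (((k:ℝ) - δ) / (1 - δ) * ε) := by
    field_simp
    ring
  linarith [mul_le_mul_of_nonneg_left hS h1.le, mul_nonneg hδ0.le hBnn, e5]
end

section
/- Let Ā be the δ-diagonal adjacency matrix of a graph G on n ≥ k ≥ 10 vertices with maximum clique size k (Ā_{ii} = δ = 1/2, Ā_{ij} = 1 if adjacent, 0 otherwise), and ε < δ(1−δ)/(6n⁷). If (x̂, x̂) is a symmetric ε-well-supported Nash equilibrium of (Ā, Ā) whose support is NOT a clique of size k, then ⟨x̂, Ā x̂⟩ ≤ 1 − 1/k + δ/k − 2δ/(n²k⁴) + 2ε. -/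
open Matrix Finset

private noncomputable def Eg {n : ℕ} (G : SimpleGraph (Fin n)) [DecidableRel G.Adj]
    (x : Fin n → ℝ) : ℝ :=
  ∑ i, ∑ j, (if G.Adj i j then x i * x j else 0)

private lemma Eg_le_one_sub_sq {n : ℕ} (G : SimpleGraph (Fin n)) [DecidableRel G.Adj]
    (x : Fin n → ℝ) (hx : ∀ i, 0 ≤ x i) (hs : ∑ i, x i = 1) :
    Eg G x ≤ 1 - ∑ i, x i ^ 2 := by
  unfold Eg
  have h1 : (∑ i, x i) * (∑ j, x j) = 1 := by rw [hs]; ring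
  rw [Finset.sum_mul_sum] at h1
  have h2 : ∀ i : Fin n, ∑ j, (if G.Adj i j then x i * x j else 0) + x i ^ 2
      ≤ ∑ j, x i * x j := by
    intro i
    have e : x i ^ 2 = ∑ j, (if j = i then x i * x j else 0) := by
      rw [Finset.sum_ite_eq' univ i (fun j => x i * x j)]
      simp [sq]
    rw [e, ← Finset.sum_add_distrib]
    apply Finset.sum_le_sum
    intro j _
    by_cases hij : j = i
    · subst hij; simp [G.irrefl]
    · by_cases ha : G.Adj i j
      · rw [if_pos ha, if_neg hij, add_zero]
      · rw [if_neg ha, if_neg hij, zero_add]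
        exact mul_nonneg (hx i) (hx j)
  have h3 := Finset.sum_le_sum (fun i (_ : i ∈ univ) => h2 i)
  rw [Finset.sum_add_distrib] at h3
  linarith

private lemma ms_aux {n k : ℕ} (hk : 0 < k) (G : SimpleGraph (Fin n)) [DecidableRel G.Adj]
    (hmax : ∀ S : Finset (Fin n), G.IsClique (S : Set (Fin n)) → S.card ≤ k) :
    ∀ N : ℕ, ∀ x : Fin n → ℝ, (∀ i, 0 ≤ x i) → ∑ i, x i = 1 →
      (univ.filter (fun i => x i ≠ 0)).card ≤ N → Eg G x ≤ 1 - 1 / k := by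
  intro N
  induction N with
  | zero =>
    intro x hx hs hc
    exfalso
    have he : univ.filter (fun i => x i ≠ 0) = ∅ := Finset.card_eq_zero.mp (Nat.le_zero.mp hc)
    have hz : ∀ i, x i = 0 := by
      intro i
      by_contra hne
      have hi : i ∈ univ.filter (fun i => x i ≠ 0) := by simp [hne]
      rw [he] at hi; simp at hi
    rw [Finset.sum_congr rfl (fun i _ => hz i)] at hs
    simp at hs
  | succ N ih =>
    intro x hx hs hc
    by_cases hcl : G.IsClique ((univ.filter (fun i => x i ≠ 0) : Finset (Fin n)) : Set (Fin n))
    · -- support is a clique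
      set S := univ.filter (fun i => x i ≠ 0) with hS
      have hcard : S.card ≤ k := hmax S hcl
      have hSpos : 0 < S.card := by
        rw [Finset.card_pos]
        by_contra h
        rw [Finset.not_nonempty_iff_eq_empty] at h
        have hz : ∀ i, x i = 0 := by
          intro i
          by_contra hne
          have hi : i ∈ S := by simp [hS, hne]
          rw [h] at hi; simp at hi
        rw [Finset.sum_congr rfl (fun i _ => hz i)] at hs
        simp at hs
      have hsum : ∑ i ∈ S, x i = 1 := by
        rw [hS, Finset.sum_filter_ne_zero]; exact hs
      have hcs : (1:ℝ) ≤ S.card * ∑ i ∈ S, x i ^ 2 := by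
        have h := sq_sum_le_card_mul_sum_sq (s := S) (f := x)
        rw [hsum] at h
        simpa using h
      have hQ : 1 / (k:ℝ) ≤ ∑ i, x i ^ 2 := by
        have hQS : ∑ i ∈ S, x i ^ 2 ≤ ∑ i, x i ^ 2 :=
          Finset.sum_le_sum_of_subset_of_nonneg (Finset.subset_univ S)
            (fun i _ _ => by positivity)
        have hkpos : (0:ℝ) < k := by exact_mod_cast hk
        have hScard : (0:ℝ) < S.card := by exact_mod_cast hSpos
        have h1 : 1 / (S.card : ℝ) ≤ ∑ i ∈ S, x i ^ 2 := by
          rw [div_le_iff₀ hScard]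
          nlinarith
        have h2 : 1 / (k:ℝ) ≤ 1 / (S.card : ℝ) :=
          one_div_le_one_div_of_le hScard (by exact_mod_cast hcard)
        linarith
      have h := Eg_le_one_sub_sq G x hx hs
      linarith
    · -- not a clique: find non-adjacent pair in support, shift mass
      rw [SimpleGraph.isClique_iff, Set.Pairwise] at hcl
      push_neg at hcl
      obtain ⟨a, ha, b, hb, hab, hnadj⟩ := hcl
      simp only [Finset.coe_filter, Set.mem_setOf_eq, Finset.mem_univ, true_and] at ha hb
      set d : Fin n → ℝ := fun i => ∑ j, (if G.Adj i j then x j else 0) with hd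
      have step : ∀ p q : Fin n, x p ≠ 0 → x q ≠ 0 → p ≠ q → ¬ G.Adj p q →
          d q ≤ d p → Eg G x ≤ 1 - 1 / k := by
        intro p q hp hq hpq hnpq hdle
        set u : Fin n → ℝ := fun i => (if i = p then (1:ℝ) else 0) - (if i = q then 1 else 0)
          with hu
        have l1 : ∀ g : Fin n → ℝ, (∑ i, g i * u i) = g p - g q := by
          intro g
          have e : ∀ i, g i * u i = (if i = p then g i else 0) - (if i = q then g i else 0) := by
            intro i
            by_cases h1 : i = p
            · subst h1
              simp [hu, hpq]
            · by_cases h2 : i = q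
              · subst h2; simp [hu, h1]
              · simp [hu, h1, h2]
          rw [Finset.sum_congr rfl (fun i _ => e i), Finset.sum_sub_distrib,
            Finset.sum_ite_eq' univ p g, Finset.sum_ite_eq' univ q g]
          simp
        have key : ∀ t : ℝ, Eg G (fun i => x i + t * u i) = Eg G x + 2 * t * (d p - d q) := by
          intro t
          have expand : Eg G (fun i => x i + t * u i)
              = Eg G x + t * (∑ i, ∑ j, (if G.Adj i j then u i * x j else 0))
                + t * (∑ i, ∑ j, (if G.Adj i j then x i * u j else 0))
                + t^2 * (∑ i, ∑ j, (if G.Adj i j then u i * u j else 0)) := by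
            unfold Eg
            rw [Finset.mul_sum, Finset.mul_sum, Finset.mul_sum, ← Finset.sum_add_distrib,
              ← Finset.sum_add_distrib, ← Finset.sum_add_distrib]
            apply Finset.sum_congr rfl
            intro i _
            rw [Finset.mul_sum, Finset.mul_sum, Finset.mul_sum, ← Finset.sum_add_distrib,
              ← Finset.sum_add_distrib, ← Finset.sum_add_distrib]
            apply Finset.sum_congr rfl
            intro j _
            by_cases hadj : G.Adj i j <;> simp [hadj] <;> ring
          have lin1 : (∑ i, ∑ j, (if G.Adj i j then u i * x j else 0)) = d p - d q := by
            have e : ∀ i, (∑ j, (if G.Adj i j then u i * x j else 0)) = d i * u i := by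
              intro i
              show _ = (∑ j, (if G.Adj i j then x j else 0)) * u i
              rw [Finset.sum_mul]
              apply Finset.sum_congr rfl
              intro j _
              by_cases hadj : G.Adj i j <;> simp [hadj] <;> ring
            rw [Finset.sum_congr rfl (fun i _ => e i), l1]
          have lin2 : (∑ i, ∑ j, (if G.Adj i j then x i * u j else 0)) = d p - d q := by
            rw [Finset.sum_comm]
            have e : ∀ j, (∑ i, (if G.Adj i j then x i * u j else 0)) = d j * u j := by
              intro j
              show _ = (∑ i, (if G.Adj j i then x i else 0)) * u j
              rw [Finset.sum_mul]
              apply Finset.sum_congr rfl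
              intro i _
              by_cases hadj : G.Adj j i
              · rw [if_pos (G.adj_symm hadj), if_pos hadj]
              · rw [if_neg (fun hh => hadj (G.adj_symm hh)), if_neg hadj, zero_mul]
            rw [Finset.sum_congr rfl (fun j _ => e j), l1]
          have quad : (∑ i, ∑ j, (if G.Adj i j then u i * u j else 0)) = 0 := by
            have hnqp : ¬ G.Adj q p := fun h => hnpq (G.adj_symm h)
            have e : ∀ i, (∑ j, (if G.Adj i j then u i * u j else 0))
                = (fun i' => ∑ j, (if G.Adj i' j then u j else 0)) i * u i := by
              intro i
              simp only
              rw [Finset.sum_mul]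
              apply Finset.sum_congr rfl
              intro j _
              by_cases hadj : G.Adj i j <;> simp [hadj] <;> ring
            rw [Finset.sum_congr rfl (fun i _ => e i), l1]
            have ezero : ∀ c : Fin n, ¬ G.Adj c p → ¬ G.Adj c q →
                (∑ j, (if G.Adj c j then u j else 0)) = 0 := by
              intro c hcp hcq
              apply Finset.sum_eq_zero
              intro j _
              by_cases hadj : G.Adj c j
              · have hjp : j ≠ p := fun h => hcp (h ▸ hadj)
                have hjq : j ≠ q := fun h => hcq (h ▸ hadj)
                simp [hadj, hu, hjp, hjq]
              · simp [hadj]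
            rw [ezero p (G.irrefl) hnpq, ezero q hnqp (G.irrefl)]
            ring
          rw [expand, lin1, lin2, quad]
          ring
        -- now shift all of q's mass to p
        set y : Fin n → ℝ := fun i => x i + x q * u i with hy
        have hyval : ∀ i, y i = if i = p then x p + x q else if i = q then 0 else x i := by
          intro i
          by_cases h1 : i = p
          · subst h1; simp [hy, hu, hpq]
          · by_cases h2 : i = q
            · subst h2; simp [hy, hu, h1]
            · simp [hy, hu, h1, h2]
        have hynn : ∀ i, 0 ≤ y i := by
          intro i
          rw [hyval i]
          by_cases h1 : i = p
          · rw [if_pos h1]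
            have := hx p; have := hx q; linarith
          · rw [if_neg h1]
            by_cases h2 : i = q
            · rw [if_pos h2]
            · rw [if_neg h2]; exact hx i
        have hysum : ∑ i, y i = 1 := by
          have : ∑ i, y i = ∑ i, x i + x q * ∑ i, u i := by
            rw [Finset.mul_sum, ← Finset.sum_add_distrib]
          rw [this, hs]
          have : ∑ i, u i = 0 := by
            rw [hu]
            simp only
            rw [Finset.sum_sub_distrib, Finset.sum_ite_eq' univ p (fun _ => (1:ℝ)),
              Finset.sum_ite_eq' univ q (fun _ => (1:ℝ))]
            simp
          rw [this]; ring
        have hysupp : (univ.filter (fun i => y i ≠ 0)).card ≤ N := by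
          have hsub : univ.filter (fun i => y i ≠ 0)
              ⊆ (univ.filter (fun i => x i ≠ 0)).erase q := by
            intro i hi
            simp only [Finset.mem_filter, Finset.mem_univ, true_and] at hi
            rw [Finset.mem_erase]
            constructor
            · intro h
              rw [h, hyval q] at hi
              rw [if_neg (fun hh => hpq hh.symm), if_pos rfl] at hi
              exact hi rfl
            · simp only [Finset.mem_filter, Finset.mem_univ, true_and]
              rw [hyval i] at hi
              by_cases h1 : i = p
              · subst h1; exact hp
              · by_cases h2 : i = q
                · subst h2; simp [h1] at hi
                · simpa [h1, h2] using hi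
          have hqmem : q ∈ univ.filter (fun i => x i ≠ 0) := by simp [hq]
          calc (univ.filter (fun i => y i ≠ 0)).card
              ≤ ((univ.filter (fun i => x i ≠ 0)).erase q).card := Finset.card_le_card hsub
            _ = (univ.filter (fun i => x i ≠ 0)).card - 1 :=
                Finset.card_erase_of_mem hqmem
            _ ≤ N := by omega
        have hEy := ih y hynn hysum hysupp
        have hkey := key (x q)
        have hxq : 0 ≤ x q := hx q
        have : Eg G x ≤ Eg G y := by
          rw [hy] at *
          rw [hkey]
          nlinarith
        linarith
      rcases le_total (d b) (d a) with hle | hle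
      · exact step a b ha hb hab hnadj hle
      · exact step b a hb ha (fun h => hab h.symm) (fun h => hnadj (G.adj_symm h)) hle

private lemma motzkin_straus {n k : ℕ} (hk : 0 < k) (G : SimpleGraph (Fin n))
    [DecidableRel G.Adj]
    (hmax : ∀ S : Finset (Fin n), G.IsClique (S : Set (Fin n)) → S.card ≤ k)
    (x : Fin n → ℝ) (hx : ∀ i, 0 ≤ x i) (hs : ∑ i, x i = 1) :
    Eg G x ≤ 1 - 1 / k :=
  ms_aux hk G hmax (univ.filter (fun i => x i ≠ 0)).card x hx hs le_rfl

set_option maxHeartbeats 1000000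

private lemma numfin (K Q : ℝ) (hK : 10 ≤ K) (h : K^6 + 2*K ≤ Q*K^7) :
    1/K + 2/(K^2*K^4) ≤ Q := by
  have hK0 : (0:ℝ) < K := by linarith
  rw [div_add_div _ _ (by positivity) (by positivity), div_le_iff₀ (by positivity)]
  nlinarith [h]

private lemma numNn (K Nn : ℝ) (hK : 10 ≤ K) (hN : K ≤ Nn) :
    2/(Nn^2*K^4) ≤ 2/(K^2*K^4) := by
  have hK0 : (0:ℝ) < K := by linarith
  apply div_le_div_of_nonneg_left (by norm_num) (by positivity)
  have h1 : K^2 ≤ Nn^2 := by nlinarith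
  exact mul_le_mul_of_nonneg_right h1 (by positivity)

private lemma num1 (K Nn s Q : ℝ) (hK : 10 ≤ K) (hN : K ≤ Nn) (hs : 1 - 1/K^2 ≤ s)
    (h : s^2 ≤ (K-1)*Q) : 1/K + 2/(Nn^2*K^4) ≤ Q := by
  have hK0 : (0:ℝ) < K := by linarith
  have hK1 : (0:ℝ) < K - 1 := by linarith
  have hs0 : (0:ℝ) ≤ 1 - 1/K^2 := by
    have h100 : 1/K^2 ≤ 1/100 := by
      apply div_le_div_of_nonneg_left (by norm_num) (by norm_num)
      nlinarith
    linarith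
  have h2 : (1 - 1/K^2)^2 ≤ (K-1)*Q := by nlinarith
  have e1 : (1 - 1/K^2) = (K^2-1)/K^2 := by field_simp
  rw [e1, div_pow, div_le_iff₀ (by positivity)] at h2
  -- h2 : (K^2-1)^2 ≤ (K-1)*Q*(K^2)^2
  have h2' : (K^2-1)^2*K^3 ≤ (K-1)*Q*(K^2)^2*K^3 :=
    mul_le_mul_of_nonneg_right h2 (by positivity)
  have c1 : (0:ℝ) ≤ K^4*(K-10) := mul_nonneg (by positivity) (by linarith)
  have c2 : (0:ℝ) ≤ K^3*(K-10) := mul_nonneg (by positivity) (by linarith)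
  have c3 : (0:ℝ) ≤ K*(K-10) := mul_nonneg (by positivity) (by linarith)
  have hf : (0:ℝ) ≤ K^5 - K^4 - K^3 - 2*K := by nlinarith [c1, c2, c3]
  have hpoly : (K-1)*(K^6+2*K) ≤ (K^2-1)^2*K^3 := by nlinarith [mul_nonneg hK1.le hf]
  have h'' : (K-1)*(K^6+2*K) ≤ (K-1)*(Q*K^7) := by linarith [h2', hpoly]
  have hfin := le_of_mul_le_mul_left h'' hK1
  have := numfin K Q hK hfin
  have := numNn K Nn hK hN
  linarith

private lemma num2 (K Nn s m Q : ℝ) (hK : 10 ≤ K) (hN : K ≤ Nn) (hs : 1 - 1/K^2 ≤ s)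
    (hm0 : 0 ≤ m) (hm : m ≤ 1/(2*K) + 1/K^6)
    (h : (K-1)*m^2 + (s-m)^2 ≤ (K-1)*Q) : 1/K + 2/(Nn^2*K^4) ≤ Q := by
  have hK0 : (0:ℝ) < K := by linarith
  have hK1 : (0:ℝ) < K - 1 := by linarith
  have hKm : K*m ≤ 1/2 + 1/K^5 := by
    have e : K * (1/(2*K) + 1/K^6) = 1/2 + 1/K^5 := by field_simp
    have := mul_le_mul_of_nonneg_left hm hK0.le
    rw [e] at this
    exact this
  have h5 : 1/K^5 ≤ 1/100000 := by
    apply div_le_div_of_nonneg_left (by norm_num) (by norm_num)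
    nlinarith [sq_nonneg K, sq_nonneg (K-10), sq_nonneg (K*(K-10))]
  have h100 : 1/K^2 ≤ 1/100 := by
    apply div_le_div_of_nonneg_left (by norm_num) (by norm_num)
    nlinarith
  have hsm : (48:ℝ)/100 ≤ s - K*m := by linarith
  have hsq : (48/100:ℝ)*(48/100) ≤ (s-K*m)*(s-K*m) :=
    mul_self_le_mul_self (by norm_num) hsm
  have hid : K*((K-1)*m^2 + (s-m)^2) = (K*m - s)^2 + (K-1)*s^2 := by ring
  have hQ1 : (2304/10000:ℝ) + (K-1)*s^2 ≤ K*(K-1)*Q := by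
    have := mul_le_mul_of_nonneg_left h hK0.le
    nlinarith [this, hid, hsq]
  have hs0 : (0:ℝ) ≤ 1 - 1/K^2 := by linarith
  have hs2 : (1-1/K^2)^2 ≤ s^2 := by nlinarith
  have e1 : (1 - 1/K^2) = (K^2-1)/K^2 := by field_simp
  rw [e1, div_pow, div_le_iff₀ (by positivity)] at hs2
  -- hs2 : (K^2-1)^2 ≤ s^2*(K^2)^2
  have hA : (2304/10000:ℝ)*K^4 + (K-1)*(K^2-1)^2 ≤ (K-1)*Q*K^5 := by
    have t1 := mul_le_mul_of_nonneg_right hQ1 (by positivity : (0:ℝ) ≤ K^4)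
    have t2 : (K-1)*(K^2-1)^2 ≤ (K-1)*(s^2*(K^2)^2) :=
      mul_le_mul_of_nonneg_left hs2 hK1.le
    linarith [t1, t2]
  have hB : (2304/10000:ℝ)*K^6 + (K-1)*(K^2-1)^2*K^2 ≤ (K-1)*(Q*K^7) := by
    have := mul_le_mul_of_nonneg_right hA (by positivity : (0:ℝ) ≤ K^2)
    linarith [this]
  have hc : (0:ℝ) ≤ (K-10)*(K^2+10*K+100) := mul_nonneg (by linarith) (by positivity)
  have hK3 : (1000:ℝ) ≤ K^3 := by nlinarith [hc]
  have ca : (0:ℝ) ≤ K^5*(K-10) := mul_nonneg (by positivity) (by linarith)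
  have cb : (0:ℝ) ≤ K^2*(K^3-1000) := mul_nonneg (by positivity) (by linarith)
  have cc : (0:ℝ) ≤ K^2*(K-10) := mul_nonneg (by positivity) (by linarith)
  have cd : (0:ℝ) ≤ K*(K-10) := mul_nonneg (by positivity) (by linarith)
  have hpoly2 : (K-1)*(K^6+2*K) ≤ (2304/10000:ℝ)*K^6 + (K-1)*(K^2-1)^2*K^2 := by
    nlinarith [ca, cb, cc, cd, hK]
  have h'' : (K-1)*(K^6+2*K) ≤ (K-1)*(Q*K^7) := le_trans hpoly2 hB
  have hfin := le_of_mul_le_mul_left h'' hK1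
  have := numfin K Q hK hfin
  have := numNn K Nn hK hN
  linarith

theorem stmt_15 {n k : ℕ} (hk : 10 ≤ k) (hkn : k ≤ n)
    (G : SimpleGraph (Fin n)) [DecidableRel G.Adj]
    (hmax : ∀ S : Finset (Fin n), G.IsClique (S : Set (Fin n)) → S.card ≤ k)
    (hex : ∃ S : Finset (Fin n), G.IsClique (S : Set (Fin n)) ∧ S.card = k)
    (δ : ℝ) (hδ : δ = 1 / 2)
    (Abar : Matrix (Fin n) (Fin n) ℝ)
    (hAbar : ∀ i j, Abar i j = if i = j then δ else if G.Adj i j then 1 else 0)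
    (ε : ℝ) (hε : 0 < ε) (hεsmall : ε < δ * (1 - δ) / (6 * (n : ℝ) ^ 7))
    (xhat : Fin n → ℝ) (hxhat : xhat ∈ stdSimplex ℝ (Fin n))
    (hws : ∀ i, 0 < xhat i → ∀ j, (Abar.mulVec xhat) j - ε ≤ (Abar.mulVec xhat) i)
    (hnotclique : ¬ ∃ C : Finset (Fin n), G.IsClique (C : Set (Fin n)) ∧ C.card = k ∧
      (∀ i, 0 < xhat i ↔ i ∈ C)) :
    xhat ⬝ᵥ Abar.mulVec xhat
      ≤ 1 - 1 / k + δ / k - 2 * δ / ((n : ℝ) ^ 2 * (k : ℝ) ^ 4) + 2 * ε := by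
  obtain ⟨hx0, hsum⟩ := hxhat
  subst hδ
  set K : ℝ := (k : ℝ) with hKdef
  set Nn : ℝ := (n : ℝ) with hNdef
  have hK10 : (10:ℝ) ≤ K := by rw [hKdef]; exact_mod_cast hk
  have hKN : K ≤ Nn := by rw [hKdef, hNdef]; exact_mod_cast hkn
  have hKpos : (0:ℝ) < K := by linarith
  have hNpos : (0:ℝ) < Nn := by linarith
  set x := xhat with hxdef
  set w : Fin n → ℝ := fun i => ∑ j, (if j ≠ i ∧ ¬ G.Adj i j then x j else 0) with hwdef
  have hwnn : ∀ i, 0 ≤ w i := by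
    intro i
    rw [hwdef]
    apply Finset.sum_nonneg
    intro j _
    by_cases h : j ≠ i ∧ ¬ G.Adj i j
    · rw [if_pos h]; exact hx0 j
    · rw [if_neg h]
  set Q : ℝ := ∑ i, x i ^ 2 with hQdef
  set W : ℝ := ∑ i, x i * w i with hWdef
  have hQnn : 0 ≤ Q := by
    rw [hQdef]; apply Finset.sum_nonneg; intro i _; positivity
  have hWnn : 0 ≤ W := by
    rw [hWdef]; apply Finset.sum_nonneg
    intro i _; exact mul_nonneg (hx0 i) (hwnn i)
  -- row sums of Abar against x
  have hmv : ∀ i, Abar.mulVec x i = 1/2 * x i + ∑ j, (if G.Adj i j then x j else 0) := by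
    intro i
    show ∑ j, Abar i j * x j = _
    have e : ∀ j, Abar i j * x j
        = (if j = i then 1/2 * x j else 0) + (if G.Adj i j then x j else 0) := by
      intro j
      rw [hAbar i j]
      by_cases h1 : i = j
      · subst h1
        rw [if_pos rfl, if_pos rfl, if_neg (G.irrefl)]
        ring
      · rw [if_neg h1, if_neg (fun hh : j = i => h1 hh.symm)]
        by_cases h2 : G.Adj i j
        · rw [if_pos h2, if_pos h2]; ring
        · rw [if_neg h2, if_neg h2]; ring
    rw [Finset.sum_congr rfl (fun j _ => e j), Finset.sum_add_distrib,
      Finset.sum_ite_eq' univ i (fun j => 1/2 * x j)]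
    simp
  -- partition of total mass seen from i
  have hpart : ∀ i, x i + (∑ j, (if G.Adj i j then x j else 0)) + w i = 1 := by
    intro i
    rw [hwdef]
    have e : ∀ j, (if j = i then x j else 0) + (if G.Adj i j then x j else 0)
        + (if j ≠ i ∧ ¬ G.Adj i j then x j else 0) = x j := by
      intro j
      by_cases h1 : j = i
      · subst h1
        rw [if_pos rfl, if_neg (G.irrefl), if_neg (by simp)]
        ring
      · by_cases h2 : G.Adj i j
        · rw [if_neg h1, if_pos h2, if_neg (by simp [h2])]
          ring
        · rw [if_neg h1, if_neg h2, if_pos ⟨h1, h2⟩]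
          ring
    have := Finset.sum_congr rfl (fun j (_ : j ∈ univ) => e j)
    rw [Finset.sum_add_distrib, Finset.sum_add_distrib,
      Finset.sum_ite_eq' univ i (fun j => x j), hsum] at this
    simp only [Finset.mem_univ, if_true] at this
    linarith [this]
  have hmv2 : ∀ i, Abar.mulVec x i = 1 - 1/2 * x i - w i := by
    intro i
    rw [hmv i]
    have := hpart i
    linarith
  -- value identity
  have hvE : x ⬝ᵥ Abar.mulVec x = 1 - Q/2 - W := by
    show ∑ i, x i * Abar.mulVec x i = _
    have e : ∀ i, x i * Abar.mulVec x i = x i - 1/2 * x i ^ 2 - x i * w i := by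
      intro i
      rw [hmv2 i]
      ring
    rw [Finset.sum_congr rfl (fun i _ => e i), Finset.sum_sub_distrib,
      Finset.sum_sub_distrib, hsum, hQdef, hWdef, ← Finset.mul_sum]
    ring
  -- Motzkin–Straus consequence
  have hEg : Eg G x = 1 - Q - W := by
    unfold Eg
    have e : ∀ i, (∑ j, (if G.Adj i j then x i * x j else 0))
        = x i * (1 - x i - w i) := by
      intro i
      have e2 : (∑ j, (if G.Adj i j then x i * x j else 0))
          = x i * ∑ j, (if G.Adj i j then x j else 0) := by
        rw [Finset.mul_sum]
        apply Finset.sum_congr rfl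
        intro j _
        by_cases h2 : G.Adj i j
        · rw [if_pos h2, if_pos h2]
        · rw [if_neg h2, if_neg h2, mul_zero]
      rw [e2]
      have := hpart i
      have e3 : (∑ j, (if G.Adj i j then x j else 0)) = 1 - x i - w i := by linarith
      rw [e3]
    rw [Finset.sum_congr rfl (fun i _ => e i)]
    have e4 : ∀ i, x i * (1 - x i - w i) = x i - x i ^ 2 - x i * w i := fun i => by ring
    rw [Finset.sum_congr rfl (fun i _ => e4 i), Finset.sum_sub_distrib,
      Finset.sum_sub_distrib, hsum, hQdef, hWdef]
  have hQW : 1/K ≤ Q + W := by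
    have hms := motzkin_straus (by omega : 0 < k) G hmax x hx0 hsum
    rw [hEg] at hms
    rw [hKdef]
    linarith
  -- well-supported consequence
  have hvle : ∀ i, 0 < x i → 1 - Q/2 - W ≤ 1 - 1/2 * x i - w i + ε := by
    intro i hi
    have h1 : ∀ j, x j * Abar.mulVec x j ≤ x j * (Abar.mulVec x i + ε) := by
      intro j
      apply mul_le_mul_of_nonneg_left _ (hx0 j)
      have := hws i hi j
      linarith
    have h2 : x ⬝ᵥ Abar.mulVec x ≤ Abar.mulVec x i + ε := by
      show ∑ j, x j * Abar.mulVec x j ≤ _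
      calc ∑ j, x j * Abar.mulVec x j ≤ ∑ j, x j * (Abar.mulVec x i + ε) :=
            Finset.sum_le_sum (fun j _ => h1 j)
        _ = (∑ j, x j) * (Abar.mulVec x i + ε) := by rw [← Finset.sum_mul]
        _ = Abar.mulVec x i + ε := by rw [hsum]; ring
    rw [hvE, hmv2 i] at h2
    linarith
  -- main quantitative bound
  have hfinal : 1/(2*K) + 1/(Nn^2*K^4) - 2*ε ≤ Q/2 + W := by
    rcases le_or_gt (2/(Nn^2*K^4)) W with hWbig | hWsmall
    · have e2 : (2:ℝ)/(Nn^2*K^4) = 2*(1/(Nn^2*K^4)) := by ring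
      have e3 : 1/(2*K) = (1/K)/2 := by ring
      linarith [hQW, hε, hWbig]
    · -- W is small; heavy vertices form a clique
      set C : Finset (Fin n) := univ.filter (fun i => 1/(Nn*K^2) < x i) with hCdef
      have hthr : (0:ℝ) < 1/(Nn*K^2) := by positivity
      have hCx : ∀ i ∈ C, 1/(Nn*K^2) < x i := by
        intro i hi
        rw [hCdef] at hi
        simpa using hi
      have hwx : ∀ i j : Fin n, j ≠ i → ¬ G.Adj i j → x j ≤ w i := by
        intro i j hji hnadj
        rw [hwdef]
        have hterm : ∀ m ∈ univ, 0 ≤ (if m ≠ i ∧ ¬ G.Adj i m then x m else 0) := by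
          intro m _
          by_cases h : m ≠ i ∧ ¬ G.Adj i m
          · rw [if_pos h]; exact hx0 m
          · rw [if_neg h]
        have := Finset.single_le_sum hterm (Finset.mem_univ j)
        rw [if_pos ⟨hji, hnadj⟩] at this
        exact this
      have hCclique : G.IsClique (C : Set (Fin n)) := by
        intro i hi j hj hij
        simp only [Finset.coe_filter, Set.mem_setOf_eq, Finset.mem_univ, true_and,
          hCdef] at hi hj
        by_contra hnadj
        have hwi : x j ≤ w i := hwx i j (fun h => hij h.symm) hnadj
        have hwj : x i ≤ w j := hwx j i hij (fun h => hnadj (G.adj_symm h))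
        have hWge : x i * w i + x j * w j ≤ W := by
          rw [hWdef]
          have hsub : ({i, j} : Finset (Fin n)) ⊆ univ := Finset.subset_univ _
          have := Finset.sum_le_sum_of_subset_of_nonneg hsub
            (fun m _ _ => mul_nonneg (hx0 m) (hwnn m))
          rw [Finset.sum_pair hij] at this
          exact this
        have hx2 : 1/(Nn*K^2) * (1/(Nn*K^2)) < x i * x j := by
          apply mul_lt_mul'' hi hj (le_of_lt hthr) (le_of_lt hthr)
        have he : 1/(Nn*K^2) * (1/(Nn*K^2)) = 1/(Nn^2*K^4) := by
          field_simp
        rw [he] at hx2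
        have hxi0 : 0 ≤ x i := hx0 i
        have hxj0 : 0 ≤ x j := hx0 j
        have p1 : x i * x j ≤ x i * w i := mul_le_mul_of_nonneg_left hwi hxi0
        have p2 : x j * x i ≤ x j * w j := mul_le_mul_of_nonneg_left hwj hxj0
        have e2 : (2:ℝ)/(Nn^2*K^4) = 2*(1/(Nn^2*K^4)) := by ring
        nlinarith [hWge, p1, p2, hx2, hWsmall]
      have hCk : C.card ≤ k := hmax C hCclique
      -- mass outside C is small
      have hLbound : ∑ i ∈ univ.filter (fun i => i ∉ C), x i ≤ 1/K^2 := by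
        have h1 : ∀ i ∈ univ.filter (fun i => i ∉ C), x i ≤ 1/(Nn*K^2) := by
          intro i hi
          rw [Finset.mem_filter] at hi
          have hi2 := hi.2
          rw [hCdef, Finset.mem_filter] at hi2
          exact le_of_not_gt (fun hlt => hi2 ⟨Finset.mem_univ i, hlt⟩)
        calc ∑ i ∈ univ.filter (fun i => i ∉ C), x i
            ≤ ∑ _i ∈ univ.filter (fun i => i ∉ C), 1/(Nn*K^2) :=
              Finset.sum_le_sum h1
          _ = (univ.filter (fun i => i ∉ C)).card * (1/(Nn*K^2)) := by
              rw [Finset.sum_const, nsmul_eq_mul]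
          _ ≤ Nn * (1/(Nn*K^2)) := by
              apply mul_le_mul_of_nonneg_right _ (le_of_lt hthr)
              rw [hNdef]
              exact_mod_cast Finset.card_le_card (Finset.subset_univ _)
              |>.trans (by simp)
          _ = 1/K^2 := by field_simp
      have hsC : 1 - 1/K^2 ≤ ∑ i ∈ C, x i := by
        have hsplit := Finset.sum_filter_add_sum_filter_not univ (fun i => i ∈ C) x
        rw [Finset.filter_mem_eq_inter, Finset.univ_inter, hsum] at hsplit
        linarith
      have hQC : ∑ i ∈ C, x i ^ 2 ≤ Q := by
        rw [hQdef]
        exact Finset.sum_le_sum_of_subset_of_nonneg (Finset.subset_univ C)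
          (fun i _ _ => by positivity)
      rcases lt_or_eq_of_le hCk with hlt | heq
      · -- at most k-1 heavy vertices
        have hcard : (C.card : ℝ) ≤ K - 1 := by
          rw [hKdef]
          have : C.card ≤ k - 1 := by omega
          have h2 : ((k:ℝ) - 1) = ((k - 1 : ℕ) : ℝ) := by
            have : (1:ℕ) ≤ k := by omega
            push_cast [this]
            ring
          rw [h2]
          exact_mod_cast this
        have hcs := sq_sum_le_card_mul_sum_sq (s := C) (f := x)
        have hnum : (∑ i ∈ C, x i)^2 ≤ (K-1) * Q := by
          calc (∑ i ∈ C, x i)^2 ≤ (C.card : ℝ) * ∑ i ∈ C, x i ^ 2 := hcs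
            _ ≤ (K-1) * Q := by
                apply mul_le_mul hcard hQC (Finset.sum_nonneg (fun i _ => by positivity))
                linarith
        have hn1 := num1 K Nn (∑ i ∈ C, x i) Q hK10 hKN hsC hnum
        have e2 : (2:ℝ)/(Nn^2*K^4) = 2*(1/(Nn^2*K^4)) := by ring
        have e3 : 1/(2*K) = (1/K)/2 := by ring
        linarith [hWnn, hε, hn1]
      · -- exactly k heavy vertices: a k-clique, but not the support
        have hne : ¬ ∀ i, 0 < x i ↔ i ∈ C := fun h => hnotclique ⟨C, hCclique, heq, h⟩
        rw [not_forall] at hne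
        obtain ⟨j₀, hj₀⟩ := hne
        have hj₀pos : 0 < x j₀ ∧ j₀ ∉ C := by
          by_cases hmem : j₀ ∈ C
          · exact absurd (iff_of_true (lt_trans hthr (hCx j₀ hmem)) hmem) hj₀
          · refine ⟨?_, hmem⟩
            by_contra hxn
            exact hj₀ (iff_of_false hxn hmem)
        obtain ⟨hj₀x, hj₀C⟩ := hj₀pos
        -- j₀ misses some heavy vertex
        have hmiss : ∃ i₀ ∈ C, ¬ G.Adj j₀ i₀ := by
          by_contra hall
          push_neg at hall
          have hclique2 : G.IsClique ((insert j₀ C : Finset (Fin n)) : Set (Fin n)) := by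
            rw [Finset.coe_insert]
            apply hCclique.insert
            intro b hb _
            exact hall b hb
          have := hmax _ hclique2
          rw [Finset.card_insert_of_notMem hj₀C, heq] at this
          omega
        obtain ⟨i₀, hi₀C, hni₀⟩ := hmiss
        have hi₀j₀ : i₀ ≠ j₀ := fun h => hj₀C (h ▸ hi₀C)
        have hwj₀ : x i₀ ≤ w j₀ := hwx j₀ i₀ hi₀j₀ hni₀
        have hm1 : x i₀ ≤ Q/2 + W + ε := by
          have := hvle j₀ hj₀x
          have hxj₀ : 0 ≤ x j₀ := hx0 j₀
          linarith
        rcases le_or_gt (1/(2*K) + 1/K^6) (x i₀) with hbig | hsmall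
        · have hNK : 1/(Nn^2*K^4) ≤ 1/K^6 := by
            apply div_le_div_of_nonneg_left (by norm_num) (by positivity)
            have h1 : K^2 ≤ Nn^2 := by nlinarith
            calc K^6 = K^2*K^4 := by ring
              _ ≤ Nn^2*K^4 := mul_le_mul_of_nonneg_right h1 (by positivity)
          linarith [hm1, hbig, hNK, hε]
        · -- x i₀ is small: strong norm lower bound
          have herase : (C.erase i₀).card = k - 1 := by
            rw [Finset.card_erase_of_mem hi₀C, heq]
          have hsplitC : ∑ i ∈ C, x i = x i₀ + ∑ i ∈ C.erase i₀, x i := by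
            rw [← Finset.add_sum_erase C x hi₀C]
          have hcs2 := sq_sum_le_card_mul_sum_sq (s := C.erase i₀) (f := x)
          have hcard2 : ((C.erase i₀).card : ℝ) = K - 1 := by
            rw [herase, hKdef]
            have : (1:ℕ) ≤ k := by omega
            push_cast [this]
            ring
          have hQsplit : x i₀ ^ 2 + ∑ i ∈ C.erase i₀, x i ^ 2 ≤ Q := by
            calc x i₀ ^ 2 + ∑ i ∈ C.erase i₀, x i ^ 2 = ∑ i ∈ C, x i ^ 2 := by
                  rw [← Finset.add_sum_erase C (fun i => x i ^ 2) hi₀C]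
              _ ≤ Q := hQC
          have hnum2 : (K-1) * (x i₀)^2 + ((∑ i ∈ C, x i) - x i₀)^2 ≤ (K-1) * Q := by
            rw [hsplitC]
            have e : x i₀ + (∑ i ∈ C.erase i₀, x i) - x i₀ = ∑ i ∈ C.erase i₀, x i := by
              ring
            rw [e]
            rw [hcard2] at hcs2
            nlinarith [hQsplit, hcs2]
          have hn2 := num2 K Nn (∑ i ∈ C, x i) (x i₀) Q hK10 hKN hsC (hx0 i₀)
            (le_of_lt hsmall) hnum2
          have e2 : (2:ℝ)/(Nn^2*K^4) = 2*(1/(Nn^2*K^4)) := by ring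
          have e3 : 1/(2*K) = (1/K)/2 := by ring
          linarith [hWnn, hε, hn2]
  -- conclude
  rw [hvE]
  have e1 : 1 - 1/K + 1/2/K - 2*(1/2)/(Nn^2*K^4) + 2*ε
      = 1 - 1/(2*K) - 1/(Nn^2*K^4) + 2*ε := by
    field_simp
    ring
  calc 1 - Q/2 - W ≤ 1 - (1/(2*K) + 1/(Nn^2*K^4) - 2*ε) := by linarith [hfinal]
    _ = 1 - 1/(2*K) - 1/(Nn^2*K^4) + 2*ε := by ring
    _ = 1 - 1/K + 1/2/K - 2*(1/2)/(Nn^2*K^4) + 2*ε := e1.symm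
end

section
/- In the 6-player team zero-sum game with utility u(x,y,z,x̂,ŷ,ẑ) = ⟨x,Ay⟩ − ⟨x̂,Aŷ⟩ + ⟨x,Cx̂⟩ + δ(x,y,ẑ) − δ(x̂,ŷ,z), where A = Aᵀ has entries ≤ −1, C is skew-symmetric, and δ(x,y,z) = (|A_min|/ε)Σᵢ(z_i(x_i−y_i) + z_{n+i}(y_i−x_i)) + |A_min|z_{2n+1}: if (x*,y*,z*,x̂*,ŷ*,ẑ*) is an ε²-Nash equilibrium with ε² ≤ 1/2, then ‖x* − y*‖_∞ ≤ 2ε and ‖x̂* − ŷ*‖_∞ ≤ 2ε. -/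
open Matrix Finset

/-- The auxiliary symmetry-enforcing term `δ(x, y, z)`. -/
noncomputable def deltaFun {n : ℕ} (Amin ε : ℝ)
    (x y : Fin n → ℝ) (z : AdvIdx n → ℝ) : ℝ :=
  (|Amin| / ε) * ∑ i : Fin n,
      (z (Sum.inl (Sum.inl i)) * (x i - y i) + z (Sum.inl (Sum.inr i)) * (y i - x i))
    + |Amin| * z (Sum.inr ())

/-- Utility of the second team in the 6-player (3 vs 3) team zero-sum game. -/
noncomputable def teamUtil {n : ℕ} (A C : Matrix (Fin n) (Fin n) ℝ) (Amin ε : ℝ)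
    (x y : Fin n → ℝ) (z : AdvIdx n → ℝ)
    (xh yh : Fin n → ℝ) (zh : AdvIdx n → ℝ) : ℝ :=
  x ⬝ᵥ A.mulVec y - xh ⬝ᵥ A.mulVec yh + x ⬝ᵥ C.mulVec xh
    + deltaFun Amin ε x y zh - deltaFun Amin ε xh yh z

lemma aux_mem {n : ℕ} (k : AdvIdx n) :
    (fun j => if j = k then (1:ℝ) else 0) ∈ stdSimplex ℝ (AdvIdx n) := by
  constructor
  · intro j; dsimp; split <;> norm_num
  · simp

lemma aux_delta_l {n : ℕ} (Amin ε : ℝ) (x y : Fin n → ℝ) (i : Fin n) :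
    deltaFun Amin ε x y (fun j => if j = Sum.inl (Sum.inl i) then (1:ℝ) else 0)
      = |Amin| / ε * (x i - y i) := by
  simp [deltaFun, Finset.sum_ite_eq', ite_mul]

lemma aux_delta_r {n : ℕ} (Amin ε : ℝ) (x y : Fin n → ℝ) (i : Fin n) :
    deltaFun Amin ε x y (fun j => if j = Sum.inl (Sum.inr i) then (1:ℝ) else 0)
      = |Amin| / ε * (y i - x i) := by
  simp [deltaFun, Finset.sum_ite_eq', ite_mul]

lemma aux_delta_diag {n : ℕ} (Amin ε : ℝ) (x : Fin n → ℝ) (z : AdvIdx n → ℝ) :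
    deltaFun Amin ε x x z = |Amin| * z (Sum.inr ()) := by
  simp [deltaFun]

lemma aux_bound {n : ℕ} (Amin ε : ℝ) (hAmin_le : Amin ≤ -1) (hε : 0 < ε)
    (hε2 : ε ^ 2 ≤ 1 / 2) (x y : Fin n → ℝ) (D : ℝ)
    (hD : D ≤ 2 * (-Amin) - 1 + ε ^ 2)
    (hmax : ∀ z' ∈ stdSimplex ℝ (AdvIdx n), deltaFun Amin ε x y z' ≤ D + ε ^ 2) :
    ∀ i, |x i - y i| ≤ 2 * ε := by
  intro i
  have habs : |Amin| = -Amin := abs_of_neg (by linarith)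
  have h1 := hmax _ (aux_mem (Sum.inl (Sum.inl i)))
  have h2 := hmax _ (aux_mem (Sum.inl (Sum.inr i)))
  rw [aux_delta_l, habs] at h1
  rw [aux_delta_r, habs] at h2
  have h1' : -Amin * (x i - y i) ≤ (2 * (-Amin)) * ε := by
    rw [div_mul_eq_mul_div, div_le_iff₀ hε] at h1
    nlinarith
  have h2' : -Amin * (y i - x i) ≤ (2 * (-Amin)) * ε := by
    rw [div_mul_eq_mul_div, div_le_iff₀ hε] at h2
    nlinarith
  rw [abs_le]
  constructor <;> nlinarith

lemma aux_dot_ub {n : ℕ} (A : Matrix (Fin n) (Fin n) ℝ)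
    (hentries : ∀ i j, A i j ≤ -1) (x y : Fin n → ℝ)
    (hx : x ∈ stdSimplex ℝ (Fin n)) (hy : y ∈ stdSimplex ℝ (Fin n)) :
    x ⬝ᵥ A.mulVec y ≤ -1 := by
  have : x ⬝ᵥ A.mulVec y = ∑ i, x i * ∑ j, A i j * y j := by
    simp [dotProduct, Matrix.mulVec]
  rw [this]
  calc ∑ i, x i * ∑ j, A i j * y j ≤ ∑ i, x i * (-1) := by
        apply Finset.sum_le_sum
        intro i _
        apply mul_le_mul_of_nonneg_left _ (hx.1 i)
        calc ∑ j, A i j * y j ≤ ∑ j, (-1) * y j :=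
              Finset.sum_le_sum fun j _ => mul_le_mul_of_nonneg_right (hentries i j) (hy.1 j)
          _ = -1 := by rw [← Finset.mul_sum, hy.2]; ring
    _ = -1 := by rw [← Finset.sum_mul, hx.2]; ring

lemma aux_dot_lb {n : ℕ} (A : Matrix (Fin n) (Fin n) ℝ) (Amin : ℝ)
    (hAge : ∀ i j, Amin ≤ A i j) (x y : Fin n → ℝ)
    (hx : x ∈ stdSimplex ℝ (Fin n)) (hy : y ∈ stdSimplex ℝ (Fin n)) :
    Amin ≤ x ⬝ᵥ A.mulVec y := by
  have : x ⬝ᵥ A.mulVec y = ∑ i, x i * ∑ j, A i j * y j := by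
    simp [dotProduct, Matrix.mulVec]
  rw [this]
  calc Amin = ∑ i, x i * Amin := by rw [← Finset.sum_mul, hx.2]; ring
    _ ≤ ∑ i, x i * ∑ j, A i j * y j := by
        apply Finset.sum_le_sum
        intro i _
        apply mul_le_mul_of_nonneg_left _ (hx.1 i)
        calc Amin = ∑ j, Amin * y j := by rw [← Finset.mul_sum, hy.2]; ring
          _ ≤ ∑ j, A i j * y j :=
              Finset.sum_le_sum fun j _ => mul_le_mul_of_nonneg_right (hAge i j) (hy.1 j)

theorem stmt_18 {n : ℕ} (A C : Matrix (Fin n) (Fin n) ℝ)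
    (hsym : A = Aᵀ) (hentries : ∀ i j, A i j ≤ -1) (hskew : C = -Cᵀ)
    (Amin : ℝ) (hAmin : IsLeast {r : ℝ | ∃ i j, A i j = r} Amin)
    (ε : ℝ) (hε : 0 < ε) (hε2 : ε ^ 2 ≤ 1 / 2)
    (xs ys xhs yhs : Fin n → ℝ) (zs zhs : AdvIdx n → ℝ)
    (hxs : xs ∈ stdSimplex ℝ (Fin n)) (hys : ys ∈ stdSimplex ℝ (Fin n))
    (hzs : zs ∈ stdSimplex ℝ (AdvIdx n))
    (hxhs : xhs ∈ stdSimplex ℝ (Fin n)) (hyhs : yhs ∈ stdSimplex ℝ (Fin n))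
    (hzhs : zhs ∈ stdSimplex ℝ (AdvIdx n))
    -- team (x, y, z) receives `-u`, i.e. minimizes `u`
    (hNashx : ∀ x' ∈ stdSimplex ℝ (Fin n),
      teamUtil A C Amin ε xs ys zs xhs yhs zhs
        ≤ teamUtil A C Amin ε x' ys zs xhs yhs zhs + ε ^ 2)
    (hNashy : ∀ y' ∈ stdSimplex ℝ (Fin n),
      teamUtil A C Amin ε xs ys zs xhs yhs zhs
        ≤ teamUtil A C Amin ε xs y' zs xhs yhs zhs + ε ^ 2)
    (hNashz : ∀ z' ∈ stdSimplex ℝ (AdvIdx n),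
      teamUtil A C Amin ε xs ys zs xhs yhs zhs
        ≤ teamUtil A C Amin ε xs ys z' xhs yhs zhs + ε ^ 2)
    -- team (xh, yh, zh) receives `u`, i.e. maximizes `u`
    (hNashxh : ∀ xh' ∈ stdSimplex ℝ (Fin n),
      teamUtil A C Amin ε xs ys zs xh' yhs zhs
        ≤ teamUtil A C Amin ε xs ys zs xhs yhs zhs + ε ^ 2)
    (hNashyh : ∀ yh' ∈ stdSimplex ℝ (Fin n),
      teamUtil A C Amin ε xs ys zs xhs yh' zhs
        ≤ teamUtil A C Amin ε xs ys zs xhs yhs zhs + ε ^ 2)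
    (hNashzh : ∀ zh' ∈ stdSimplex ℝ (AdvIdx n),
      teamUtil A C Amin ε xs ys zs xhs yhs zh'
        ≤ teamUtil A C Amin ε xs ys zs xhs yhs zhs + ε ^ 2) :
    (∀ i, |xs i - ys i| ≤ 2 * ε) ∧ (∀ i, |xhs i - yhs i| ≤ 2 * ε) := by
  obtain ⟨⟨i0, j0, hij0⟩, hlb⟩ := hAmin
  have hAmin_le : Amin ≤ -1 := hij0 ▸ hentries i0 j0
  have habs : |Amin| = -Amin := abs_of_neg (by linarith)
  have hAge : ∀ i j, Amin ≤ A i j := fun i j => hlb ⟨i, j, rfl⟩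
  have hzhub : (-Amin) * zhs (Sum.inr ()) ≤ (-Amin) * 1 := by
    apply mul_le_mul_of_nonneg_left _ (by linarith)
    calc zhs (Sum.inr ()) ≤ ∑ k, zhs k :=
          Finset.single_le_sum (fun k _ => hzhs.1 k) (Finset.mem_univ _)
      _ = 1 := hzhs.2
  have hzub : (-Amin) * zs (Sum.inr ()) ≤ (-Amin) * 1 := by
    apply mul_le_mul_of_nonneg_left _ (by linarith)
    calc zs (Sum.inr ()) ≤ ∑ k, zs k :=
          Finset.single_le_sum (fun k _ => hzs.1 k) (Finset.mem_univ _)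
      _ = 1 := hzs.2
  have hD1 : deltaFun Amin ε xs ys zhs ≤ 2 * (-Amin) - 1 + ε ^ 2 := by
    have h := hNashy xs hxs
    simp only [teamUtil] at h
    rw [aux_delta_diag, habs] at h
    have ha := aux_dot_ub A hentries xs xs hxs hxs
    have hb := aux_dot_lb A Amin hAge xs ys hxs hys
    linarith
  have hmax1 : ∀ z' ∈ stdSimplex ℝ (AdvIdx n),
      deltaFun Amin ε xs ys z' ≤ deltaFun Amin ε xs ys zhs + ε ^ 2 := by
    intro z' hz'
    have h := hNashzh z' hz'
    simp only [teamUtil] at h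
    linarith
  have hD2 : deltaFun Amin ε xhs yhs zs ≤ 2 * (-Amin) - 1 + ε ^ 2 := by
    have h := hNashyh xhs hxhs
    simp only [teamUtil] at h
    rw [aux_delta_diag, habs] at h
    have ha := aux_dot_ub A hentries xhs xhs hxhs hxhs
    have hb := aux_dot_lb A Amin hAge xhs yhs hxhs hyhs
    linarith
  have hmax2 : ∀ z' ∈ stdSimplex ℝ (AdvIdx n),
      deltaFun Amin ε xhs yhs z' ≤ deltaFun Amin ε xhs yhs zs + ε ^ 2 := by
    intro z' hz'
    have h := hNashz z' hz'
    simp only [teamUtil] at h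
    linarith
  exact ⟨aux_bound Amin ε hAmin_le hε hε2 xs ys _ hD1 hmax1,
         aux_bound Amin ε hAmin_le hε hε2 xhs yhs _ hD2 hmax2⟩
end

section
/- Let R ∈ ℝ^{n×n}, A = (R+Rᵀ)/2, C = (R−Rᵀ)/2, and suppose x*, x̂* ∈ Δⁿ satisfy: for all y' ∈ Δⁿ, ⟨x*, A x*⟩ + (1/2)⟨x*, C x̂*⟩ ≤ ⟨y', A x*⟩ + (1/2)⟨y', C x̂*⟩ + η, and for all x̂' ∈ Δⁿ, −⟨x̂*, A x̂*⟩ + (1/2)⟨x*, C x̂*⟩ ≥ −⟨x̂', A x̂*⟩ + (1/2)⟨x*, C x̂'⟩ − η. If additionally x* = x̂*, then for the matrix R' with A = −(R'+R'ᵀ)/2 and C = R'ᵀ − R' the point (x*, x*) is a symmetric 2η-Nash equilibrium of the symmetric game (R', R'ᵀ): for all x̂' ∈ Δⁿ, ⟨x̂', R' x*⟩ ≤ ⟨x*, R' x*⟩ + 2η. -/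
open Matrix

lemma skew_dot {n : ℕ} {C : Matrix (Fin n) (Fin n) ℝ} (h : Cᵀ = -C)
    (u v : Fin n → ℝ) : u ⬝ᵥ C.mulVec v = -(v ⬝ᵥ C.mulVec u) := by
  rw [Matrix.dotProduct_mulVec, ← Matrix.mulVec_transpose, h, Matrix.neg_mulVec,
    neg_dotProduct, dotProduct_comm]

theorem stmt_19 {n : ℕ} (R : Matrix (Fin n) (Fin n) ℝ)
    (A C : Matrix (Fin n) (Fin n) ℝ)
    (hA : A = (1 / 2 : ℝ) • (R + Rᵀ)) (hC : C = (1 / 2 : ℝ) • (R - Rᵀ))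
    (η : ℝ) (xs xhs : Fin n → ℝ)
    (hxs : xs ∈ stdSimplex ℝ (Fin n)) (hxhs : xhs ∈ stdSimplex ℝ (Fin n))
    (hVI1 : ∀ y' ∈ stdSimplex ℝ (Fin n),
      xs ⬝ᵥ A.mulVec xs + (1 / 2) * (xs ⬝ᵥ C.mulVec xhs)
        ≤ y' ⬝ᵥ A.mulVec xs + (1 / 2) * (y' ⬝ᵥ C.mulVec xhs) + η)
    (hVI2 : ∀ xh' ∈ stdSimplex ℝ (Fin n),
      - (xhs ⬝ᵥ A.mulVec xhs) + (1 / 2) * (xs ⬝ᵥ C.mulVec xhs)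
        ≥ - (xh' ⬝ᵥ A.mulVec xhs) + (1 / 2) * (xs ⬝ᵥ C.mulVec xh') - η)
    (heq : xs = xhs)
    (R' : Matrix (Fin n) (Fin n) ℝ)
    (hAR' : A = - ((1 / 2 : ℝ) • (R' + R'ᵀ))) (hCR' : C = R'ᵀ - R') :
    ∀ xh' ∈ stdSimplex ℝ (Fin n),
      xh' ⬝ᵥ R'.mulVec xs ≤ xs ⬝ᵥ R'.mulVec xs + 2 * η := by
  intro xh' hxh'
  subst heq
  have hskew : Cᵀ = -C := by
    subst hC
    simp [Matrix.transpose_smul, Matrix.transpose_sub]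
    module
  have hη : 0 ≤ η := by have := hVI1 xs hxs; linarith
  have h1 := hVI1 xh' hxh'
  have h2 := hVI2 xh' hxh'
  have hcc : xs ⬝ᵥ C.mulVec xs = 0 := by
    have := skew_dot hskew xs xs; linarith
  have hsw : xs ⬝ᵥ C.mulVec xh' = -(xh' ⬝ᵥ C.mulVec xs) := skew_dot hskew xs xh'
  have hR' : R' = (-A) - (1 / 2 : ℝ) • C := by
    rw [hAR', hCR']
    module
  rw [hR', Matrix.sub_mulVec, Matrix.neg_mulVec]
  simp only [dotProduct_sub, dotProduct_neg, Matrix.smul_mulVec,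
    dotProduct_smul, smul_eq_mul]
  linarith
end
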